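/- arXiv:2507.03379 — 7 statements merged into one kernel-verified Lean document; each statement's English description precedes it below -/
import Mathlib

section
/- Fix an integer n ≥ 1, radii 0 = r_n < r_{n-1} < ... < r_1 < r_0 = 1, a positive integer j, and positive reals σ_1, ..., σ_n. Define ρ_i = (σ_i − σ_{i+1})/(σ_i + σ_{i+1}) for 1 ≤ i ≤ n−1, and define C_{n,j} = 0 and, backwards for i = n−1, ..., 1, C_{i,j} = (ρ_i r_i^{2j} + C_{i+1,j})/(1 + ρ_i C_{i+1,j} r_i^{−2j}). Then for every 1 ≤ i ≤ n one has |C_{i,j}| ≤ r_i^{2j}; in particular |C_{1,j}| < 1 and all denominators in the recurrence are positive. -/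
/-- Bound on the reflection-coefficient recurrence of the radial Calderón problem:
with radii `0 = r n < r (n-1) < ... < r 0 = 1`, positive conductivities `σ i` and
`ρ i = (σ i - σ (i+1))/(σ i + σ (i+1))`, the backward recurrence
`C n = 0`, `C i = (ρ i * (r i)^(2j) + C (i+1)) / (1 + ρ i * C (i+1) * ((r i)^(2j))⁻¹)`
satisfies `|C i| ≤ (r i)^(2j)` for `1 ≤ i ≤ n`; in particular `|C 1| < 1` and all
denominators in the recurrence are positive. -/
theorem reflection_coeff_bound (n : ℕ) (hn : 1 ≤ n)
    (r : ℕ → ℝ) (hr0 : r 0 = 1) (hrn : r n = 0)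
    (hrmono : ∀ i, i < n → r (i + 1) < r i)
    (j : ℕ) (hj : 1 ≤ j)
    (σ : ℕ → ℝ) (hσ : ∀ i, 1 ≤ i → i ≤ n → 0 < σ i)
    (ρ : ℕ → ℝ)
    (hρ : ∀ i, 1 ≤ i → i ≤ n - 1 → ρ i = (σ i - σ (i + 1)) / (σ i + σ (i + 1)))
    (C : ℕ → ℝ) (hCn : C n = 0)
    (hC : ∀ i, 1 ≤ i → i ≤ n - 1 →
      C i = (ρ i * (r i) ^ (2 * j) + C (i + 1)) /
        (1 + ρ i * C (i + 1) * ((r i) ^ (2 * j))⁻¹)) :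
    (∀ i, 1 ≤ i → i ≤ n → |C i| ≤ (r i) ^ (2 * j)) ∧
    |C 1| < 1 ∧
    (∀ i, 1 ≤ i → i ≤ n - 1 → 0 < 1 + ρ i * C (i + 1) * ((r i) ^ (2 * j))⁻¹) := by

  have hmono : ∀ b a, a < b → b ≤ n → r b < r a := by
    intro b
    induction b with
    | zero => intro a h; omega
    | succ b ih =>
      intro a hab hbn
      rcases Nat.lt_or_ge a b with h | h
      · exact (hrmono b (by omega)).trans (ih a h (by omega))
      · have hab' : a = b := by omega
        subst hab'
        exact hrmono a (by omega)
  have hrpos : ∀ i, i < n → 0 < r i := by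
    intro i h
    have := hmono n i h le_rfl
    rw [hrn] at this
    exact this
  have hrnn : ∀ i, i ≤ n → 0 ≤ r i := by
    intro i h
    rcases Nat.lt_or_ge i n with h' | h'
    · exact (hrpos i h').le
    · have : i = n := by omega
      rw [this, hrn]
  have hρbound : ∀ i, 1 ≤ i → i ≤ n - 1 → |ρ i| < 1 := by
    intro i h1 h2
    have ha := hσ i h1 (by omega)
    have hb := hσ (i + 1) (by omega) (by omega)
    rw [hρ i h1 h2, abs_div, abs_of_pos (by linarith : 0 < σ i + σ (i + 1)),
      div_lt_one (by linarith)]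
    exact abs_sub_lt_iff.mpr ⟨by linarith, by linarith⟩
  have hbound : ∀ k i, i + k = n → 1 ≤ i → |C i| ≤ r i ^ (2 * j) := by
    intro k
    induction k with
    | zero =>
      intro i hik _
      have hi : i = n := by omega
      subst hi
      rw [hCn, hrn, abs_zero]
      exact pow_nonneg le_rfl _
    | succ k ih =>
      intro i hik h1
      have hin : i ≤ n - 1 := by omega
      have hc := ih (i + 1) (by omega) (by omega)
      have hri : 0 < r i := hrpos i (by omega)
      have hrlt : r (i + 1) < r i := hrmono i (by omega)
      have hrnn1 : 0 ≤ r (i + 1) := hrnn (i + 1) (by omega)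
      have htpos : 0 < r i ^ (2 * j) := pow_pos hri _
      have hclt : |C (i + 1)| < r i ^ (2 * j) :=
        lt_of_le_of_lt hc (pow_lt_pow_left₀ hrlt hrnn1 (by omega))
      have hρb := hρbound i h1 hin
      have hplt : |ρ i * C (i + 1)| < r i ^ (2 * j) := by
        rw [abs_mul]
        calc |ρ i| * |C (i + 1)| ≤ 1 * |C (i + 1)| :=
              mul_le_mul_of_nonneg_right hρb.le (abs_nonneg _)
          _ = |C (i + 1)| := one_mul _
          _ < r i ^ (2 * j) := hclt
      have hD : 0 < 1 + ρ i * C (i + 1) * (r i ^ (2 * j))⁻¹ := by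
        have h2 : -1 < ρ i * C (i + 1) * (r i ^ (2 * j))⁻¹ := by
          rw [← div_eq_mul_inv, lt_div_iff₀ htpos]
          linarith [(abs_lt.mp hplt).1]
        linarith
      rw [hC i h1 hin, abs_div, abs_of_pos hD, div_le_iff₀ hD]
      have htD : r i ^ (2 * j) * (1 + ρ i * C (i + 1) * (r i ^ (2 * j))⁻¹)
          = r i ^ (2 * j) + ρ i * C (i + 1) := by
        field_simp
      rw [htD]
      have hρ1 := abs_lt.mp hρb
      have hc1 := abs_lt.mp hclt
      rw [abs_le]
      constructor
      · nlinarith [mul_pos (by linarith : (0:ℝ) < 1 + ρ i)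
          (by linarith : (0:ℝ) < r i ^ (2 * j) + C (i + 1))]
      · nlinarith [mul_pos (by linarith : (0:ℝ) < 1 - ρ i)
          (by linarith : (0:ℝ) < r i ^ (2 * j) - C (i + 1))]
  refine ⟨fun i h1 h2 => hbound (n - i) i (by omega) h1, ?_, ?_⟩
  · have h1 := hbound (n - 1) 1 (by omega) le_rfl
    have hr1 : r 1 < 1 := by
      have := hmono 1 0 zero_lt_one hn
      rwa [hr0] at this
    have hr1n : 0 ≤ r 1 := hrnn 1 hn
    exact lt_of_le_of_lt h1 (pow_lt_one₀ hr1n hr1 (by omega))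
  · intro i h1 h2
    have hc := hbound (n - (i + 1)) (i + 1) (by omega) (by omega)
    have hri : 0 < r i := hrpos i (by omega)
    have hrlt : r (i + 1) < r i := hrmono i (by omega)
    have hrnn1 : 0 ≤ r (i + 1) := hrnn (i + 1) (by omega)
    have htpos : 0 < r i ^ (2 * j) := pow_pos hri _
    have hclt : |C (i + 1)| < r i ^ (2 * j) :=
      lt_of_le_of_lt hc (pow_lt_pow_left₀ hrlt hrnn1 (by omega))
    have hρb := hρbound i h1 h2
    have hplt : |ρ i * C (i + 1)| < r i ^ (2 * j) := by
      rw [abs_mul]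
      calc |ρ i| * |C (i + 1)| ≤ 1 * |C (i + 1)| :=
            mul_le_mul_of_nonneg_right hρb.le (abs_nonneg _)
        _ = |C (i + 1)| := one_mul _
        _ < r i ^ (2 * j) := hclt
    have h2' : -1 < ρ i * C (i + 1) * (r i ^ (2 * j))⁻¹ := by
      rw [← div_eq_mul_inv, lt_div_iff₀ htpos]
      linarith [(abs_lt.mp hplt).1]
    linarith
end

section
/- Fix r ∈ (0,1) and a positive integer j. For σ = (σ_1, σ_2) ∈ (ℝ_{>0})^2 define ρ(σ) = (σ_1 − σ_2)/(σ_1 + σ_2) and λ_j(σ) = (1 + ρ(σ) r^{2j})/(j σ_1 (1 − ρ(σ) r^{2j})). Then λ_j is strictly decreasing in each variable: for every σ ∈ (ℝ_{>0})^2, the partial derivatives satisfy ∂λ_j/∂σ_1(σ) < 0 and ∂λ_j/∂σ_2(σ) < 0. -/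
lemma aux_eq (R C x y : ℝ) (h : x + y ≠ 0) :
    (1 + ((x - y) / (x + y)) * R) / (C * (1 - ((x - y) / (x + y)) * R)) =
    ((1+R)*x + (1-R)*y) / (C * ((1-R)*x + (1+R)*y)) := by
  have hnum : (1+R)*x + (1-R)*y = (x+y) * (1 + ((x - y)/(x+y))*R) := by
    field_simp; ring
  have hden : C * ((1-R)*x + (1+R)*y) = (x+y) * (C * (1 - ((x - y)/(x+y))*R)) := by
    have h2 : (1-R)*x + (1+R)*y = (x+y) * (1 - ((x - y)/(x+y))*R) := by
      field_simp; ring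
    rw [h2]; ring
  rw [hnum, hden, mul_div_mul_left _ _ h]

/-- Strict monotonicity of the two-annulus Neumann-to-Dirichlet eigenvalue:
with `λ_j(σ₁,σ₂) = (1 + ρ r^(2j))/(j σ₁ (1 - ρ r^(2j)))`, `ρ = (σ₁-σ₂)/(σ₁+σ₂)`,
both partial derivatives are negative on `(ℝ_{>0})²`. -/
theorem two_annulus_strict_decreasing (r : ℝ) (hr : r ∈ Set.Ioo (0 : ℝ) 1)
    (j : ℕ) (hj : 1 ≤ j)
    (lam : ℝ → ℝ → ℝ)
    (hlam : ∀ s1 s2 : ℝ, lam s1 s2 =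
      (1 + ((s1 - s2) / (s1 + s2)) * r ^ (2 * j)) /
        ((j : ℝ) * s1 * (1 - ((s1 - s2) / (s1 + s2)) * r ^ (2 * j))))
    (s1 s2 : ℝ) (h1 : 0 < s1) (h2 : 0 < s2) :
    deriv (fun t => lam t s2) s1 < 0 ∧ deriv (fun t => lam s1 t) s2 < 0 := by
  set R := r ^ (2*j) with hRdef
  have hR0 : 0 < R := pow_pos hr.1 _
  have hR1 : R < 1 := pow_lt_one₀ hr.1.le hr.2 (by omega)
  have ha : 0 < 1 + R := by linarith
  have hb : 0 < 1 - R := by linarith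
  have hj1 : (1:ℝ) ≤ (j:ℝ) := by exact_mod_cast hj
  have hj0 : (0:ℝ) < (j:ℝ) := by linarith
  have hsum : 0 < (1-R)*s1 + (1+R)*s2 := by nlinarith
  constructor
  · -- derivative in s1
    have hopen : IsOpen {t : ℝ | 0 < t + s2} :=
      isOpen_lt continuous_const (continuous_id.add continuous_const)
    have hmem : s1 ∈ {t : ℝ | 0 < t + s2} := by
      simp only [Set.mem_setOf_eq]; linarith
    have hev : (fun t => lam t s2) =ᶠ[nhds s1]
        (fun t => ((1+R)*t+(1-R)*s2)/((j:ℝ)*t*((1-R)*t+(1+R)*s2))) :=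
      (hopen.eventually_mem hmem).mono (fun t ht => by
        show lam t s2 = _
        rw [hlam]; exact aux_eq R ((j:ℝ)*t) t s2 (ne_of_gt ht))
    rw [hev.deriv_eq]
    have hN : HasDerivAt (fun t => (1+R)*t+(1-R)*s2) (1+R) s1 := by
      simpa using ((hasDerivAt_id s1).const_mul (1+R)).add_const ((1-R)*s2)
    have hD1 : HasDerivAt (fun t => (j:ℝ)*t) (j:ℝ) s1 := by
      simpa using (hasDerivAt_id s1).const_mul (j:ℝ)
    have hD2 : HasDerivAt (fun t => (1-R)*t+(1+R)*s2) (1-R) s1 := by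
      simpa using ((hasDerivAt_id s1).const_mul (1-R)).add_const ((1+R)*s2)
    have hDpos : 0 < (j:ℝ)*s1*((1-R)*s1+(1+R)*s2) := by positivity
    have hD := hD1.mul hD2
    have h : HasDerivAt (fun t => ((1+R)*t+(1-R)*s2)/((j:ℝ)*t*((1-R)*t+(1+R)*s2)))
        (((1+R)*((j:ℝ)*s1*((1-R)*s1+(1+R)*s2)) - ((1+R)*s1+(1-R)*s2)*((j:ℝ)*((1-R)*s1+(1+R)*s2) + (j:ℝ)*s1*(1-R))) / ((j:ℝ)*s1*((1-R)*s1+(1+R)*s2))^2) s1 :=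
      hN.div hD hDpos.ne'
    rw [h.deriv]
    apply div_neg_of_neg_of_pos
    · nlinarith [mul_pos (mul_pos ha hb) (mul_pos h1 h1),
        mul_pos (mul_pos ha hb) (mul_pos h2 h2),
        mul_pos (mul_pos hb hb) (mul_pos h1 h2),
        mul_pos (mul_pos ha hb) (mul_pos h1 h2)]
    · positivity
  · -- derivative in s2
    have hopen : IsOpen {t : ℝ | 0 < s1 + t} :=
      isOpen_lt continuous_const (continuous_const.add continuous_id)
    have hmem : s2 ∈ {t : ℝ | 0 < s1 + t} := by
      simp only [Set.mem_setOf_eq]; linarith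
    have hev : (fun t => lam s1 t) =ᶠ[nhds s2]
        (fun t => ((1+R)*s1+(1-R)*t)/((j:ℝ)*s1*((1-R)*s1+(1+R)*t))) :=
      (hopen.eventually_mem hmem).mono (fun t ht => by
        show lam s1 t = _
        rw [hlam]; exact aux_eq R ((j:ℝ)*s1) s1 t (ne_of_gt ht))
    rw [hev.deriv_eq]
    have hN : HasDerivAt (fun t => (1+R)*s1+(1-R)*t) (1-R) s2 := by
      simpa using (((hasDerivAt_id s2).const_mul (1-R)).const_add ((1+R)*s1))
    have hD2 : HasDerivAt (fun t => (1-R)*s1+(1+R)*t) (1+R) s2 := by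
      simpa using (((hasDerivAt_id s2).const_mul (1+R)).const_add ((1-R)*s1))
    have hD : HasDerivAt (fun t => (j:ℝ)*s1*((1-R)*s1+(1+R)*t)) ((j:ℝ)*s1*(1+R)) s2 := by
      simpa using hD2.const_mul ((j:ℝ)*s1)
    have hDpos : 0 < (j:ℝ)*s1*((1-R)*s1+(1+R)*s2) := by positivity
    have h : HasDerivAt (fun t => ((1+R)*s1+(1-R)*t)/((j:ℝ)*s1*((1-R)*s1+(1+R)*t))) _ s2 :=
      hN.div hD hDpos.ne'
    rw [h.deriv]
    apply div_neg_of_neg_of_pos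
    · nlinarith [mul_pos (mul_pos hj0 (mul_pos h1 h1)) hR0]
    · positivity
end

section
/- Fix r ∈ (0,1). For σ ∈ (ℝ_{>0})^2 let Λ(σ) = (λ_1(σ), λ_2(σ)) where λ_j(σ) = (1 + ρ(σ) r^{2j})/(j σ_1 (1 − ρ(σ) r^{2j})) and ρ(σ) = (σ_1 − σ_2)/(σ_1 + σ_2). Then the Jacobian determinant of Λ satisfies det Λ'(σ) < 0 for every σ ∈ (ℝ_{>0})^2; in particular Λ'(σ) is invertible everywhere. -/
private lemma hasDerivAt_d1 (q a b j : ℝ) (ha : 0 < a) (hb : 0 < b)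
    (hq0 : 0 < q) (hq1 : q < 1) (hj : 0 < j) :
    HasDerivAt (fun t => (1 + ((t - b) / (t + b)) * q) /
        (j * t * (1 - ((t - b) / (t + b)) * q)))
      (-(1 - q) * ((1 + q) * (a ^ 2 + b ^ 2) + 2 * (1 - q) * a * b) /
        (j * a ^ 2 * ((1 - q) * a + (1 + q) * b) ^ 2)) a := by
  have hB : 0 < (1 - q) * a + (1 + q) * b :=
    add_pos (mul_pos (by linarith) ha) (mul_pos (by linarith) hb)
  -- the simplified form
  have hN : HasDerivAt (fun t => (1 + q) * t + (1 - q) * b) (1 + q) a := by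
    simpa using ((hasDerivAt_id a).const_mul (1 + q)).add_const ((1 - q) * b)
  have hL : HasDerivAt (fun t => (1 - q) * t + (1 + q) * b) (1 - q) a := by
    simpa using ((hasDerivAt_id a).const_mul (1 - q)).add_const ((1 + q) * b)
  have hJ : HasDerivAt (fun t => j * t) j a := by
    simpa using (hasDerivAt_id a).const_mul j
  have hD : HasDerivAt (fun t => j * t * ((1 - q) * t + (1 + q) * b))
      (j * ((1 - q) * a + (1 + q) * b) + j * a * (1 - q)) a := hJ.mul hL
  have hDne : j * a * ((1 - q) * a + (1 + q) * b) ≠ 0 := by positivity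
  have hg : HasDerivAt (fun t => ((1 + q) * t + (1 - q) * b) /
      (j * t * ((1 - q) * t + (1 + q) * b)))
      (-(1 - q) * ((1 + q) * (a ^ 2 + b ^ 2) + 2 * (1 - q) * a * b) /
        (j * a ^ 2 * ((1 - q) * a + (1 + q) * b) ^ 2)) a := by
    have := hN.div hD hDne
    refine this.congr_deriv ?_
    rw [div_eq_div_iff (by positivity) (by positivity)]
    ring
  apply hg.congr_of_eventuallyEq
  filter_upwards [eventually_gt_nhds ha] with t ht
  have htb : 0 < t + b := by linarith
  have hBt : 0 < (1 - q) * t + (1 + q) * b :=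
    add_pos (mul_pos (by linarith) ht) (mul_pos (by linarith) hb)
  have h1 : 1 + (t - b) / (t + b) * q = ((1 + q) * t + (1 - q) * b) / (t + b) := by
    field_simp; ring
  have h2 : 1 - (t - b) / (t + b) * q = ((1 - q) * t + (1 + q) * b) / (t + b) := by
    field_simp; ring
  rw [h1, h2]
  rw [div_eq_div_iff (by positivity) (by positivity)]
  field_simp

private lemma hasDerivAt_d2 (q a b j : ℝ) (ha : 0 < a) (hb : 0 < b)
    (hq0 : 0 < q) (hq1 : q < 1) (hj : 0 < j) :
    HasDerivAt (fun t => (1 + ((a - t) / (a + t)) * q) /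
        (j * a * (1 - ((a - t) / (a + t)) * q)))
      (-4 * q / (j * ((1 - q) * a + (1 + q) * b) ^ 2)) b := by
  have hB : 0 < (1 - q) * a + (1 + q) * b :=
    add_pos (mul_pos (by linarith) ha) (mul_pos (by linarith) hb)
  have hN : HasDerivAt (fun t => (1 + q) * a + (1 - q) * t) (1 - q) b := by
    simpa using ((hasDerivAt_id b).const_mul (1 - q)).const_add ((1 + q) * a)
  have hL : HasDerivAt (fun t => (1 - q) * a + (1 + q) * t) (1 + q) b := by
    simpa using ((hasDerivAt_id b).const_mul (1 + q)).const_add ((1 - q) * a)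
  have hD : HasDerivAt (fun t => j * a * ((1 - q) * a + (1 + q) * t))
      (j * a * (1 + q)) b := by
    simpa using hL.const_mul (j * a)
  have hDne : j * a * ((1 - q) * a + (1 + q) * b) ≠ 0 := by positivity
  have hg : HasDerivAt (fun t => ((1 + q) * a + (1 - q) * t) /
      (j * a * ((1 - q) * a + (1 + q) * t)))
      (-4 * q / (j * ((1 - q) * a + (1 + q) * b) ^ 2)) b := by
    have := hN.div hD hDne
    refine this.congr_deriv ?_
    rw [div_eq_div_iff (by positivity) (by positivity)]
    ring
  apply hg.congr_of_eventuallyEq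
  filter_upwards [eventually_gt_nhds hb] with t ht
  have hat : 0 < a + t := by linarith
  have hBt : 0 < (1 - q) * a + (1 + q) * t :=
    add_pos (mul_pos (by linarith) ha) (mul_pos (by linarith) ht)
  have h1 : 1 + (a - t) / (a + t) * q = ((1 + q) * a + (1 - q) * t) / (a + t) := by
    field_simp; ring
  have h2 : 1 - (a - t) / (a + t) * q = ((1 - q) * a + (1 + q) * t) / (a + t) := by
    field_simp; ring
  rw [h1, h2]
  rw [div_eq_div_iff (by positivity) (by positivity)]
  field_simp

set_option maxHeartbeats 1000000 in
/-- Negativity of the Jacobian determinant of the two-annulus forward map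
`Λ(σ) = (λ₁(σ), λ₂(σ))`: for every `σ ∈ (ℝ_{>0})²`,
`det Λ'(σ) = ∂₁λ₁ ∂₂λ₂ − ∂₁λ₂ ∂₂λ₁ < 0`. -/
theorem two_annulus_jacobian_det_neg (r : ℝ) (hr : r ∈ Set.Ioo (0 : ℝ) 1)
    (lam : ℕ → ℝ → ℝ → ℝ)
    (hlam : ∀ (j : ℕ) (s1 s2 : ℝ), lam j s1 s2 =
      (1 + ((s1 - s2) / (s1 + s2)) * r ^ (2 * j)) /
        ((j : ℝ) * s1 * (1 - ((s1 - s2) / (s1 + s2)) * r ^ (2 * j))))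
    (s1 s2 : ℝ) (h1 : 0 < s1) (h2 : 0 < s2) :
    deriv (fun t => lam 1 t s2) s1 * deriv (fun t => lam 2 s1 t) s2 -
      deriv (fun t => lam 2 t s2) s1 * deriv (fun t => lam 1 s1 t) s2 < 0 := by
  obtain ⟨hr0, hr1⟩ := hr
  have hq1 : (0:ℝ) < r ^ (2 * 1) := by positivity
  have hq1' : r ^ (2 * 1) < 1 := by
    calc r ^ (2*1) ≤ r ^ 1 := pow_le_pow_of_le_one hr0.le hr1.le (by norm_num)
    _ < 1 := by simpa using hr1
  have hq2 : (0:ℝ) < r ^ (2 * 2) := by positivity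
  have hq2' : r ^ (2 * 2) < 1 := by
    calc r ^ (2*2) ≤ r ^ 1 := pow_le_pow_of_le_one hr0.le hr1.le (by norm_num)
    _ < 1 := by simpa using hr1
  have e11 : deriv (fun t => lam 1 t s2) s1 =
      -(1 - r ^ (2*1)) * ((1 + r ^ (2*1)) * (s1 ^ 2 + s2 ^ 2) + 2 * (1 - r ^ (2*1)) * s1 * s2) /
        (((1:ℕ):ℝ) * s1 ^ 2 * ((1 - r ^ (2*1)) * s1 + (1 + r ^ (2*1)) * s2) ^ 2) := by
    simp only [hlam]
    exact (hasDerivAt_d1 (r ^ (2*1)) s1 s2 ((1:ℕ):ℝ) h1 h2 hq1 hq1' (by norm_num)).deriv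
  have e21 : deriv (fun t => lam 2 t s2) s1 =
      -(1 - r ^ (2*2)) * ((1 + r ^ (2*2)) * (s1 ^ 2 + s2 ^ 2) + 2 * (1 - r ^ (2*2)) * s1 * s2) /
        (((2:ℕ):ℝ) * s1 ^ 2 * ((1 - r ^ (2*2)) * s1 + (1 + r ^ (2*2)) * s2) ^ 2) := by
    simp only [hlam]
    exact (hasDerivAt_d1 (r ^ (2*2)) s1 s2 ((2:ℕ):ℝ) h1 h2 hq2 hq2' (by norm_num)).deriv
  have e12 : deriv (fun t => lam 1 s1 t) s2 =
      -4 * r ^ (2*1) / (((1:ℕ):ℝ) * ((1 - r ^ (2*1)) * s1 + (1 + r ^ (2*1)) * s2) ^ 2) := by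
    simp only [hlam]
    exact (hasDerivAt_d2 (r ^ (2*1)) s1 s2 ((1:ℕ):ℝ) h1 h2 hq1 hq1' (by norm_num)).deriv
  have e22 : deriv (fun t => lam 2 s1 t) s2 =
      -4 * r ^ (2*2) / (((2:ℕ):ℝ) * ((1 - r ^ (2*2)) * s1 + (1 + r ^ (2*2)) * s2) ^ 2) := by
    simp only [hlam]
    exact (hasDerivAt_d2 (r ^ (2*2)) s1 s2 ((2:ℕ):ℝ) h1 h2 hq2 hq2' (by norm_num)).deriv
  rw [e11, e21, e12, e22]
  have hp1 : r ^ (2*1) = r ^ 2 := by norm_num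
  have hp2 : r ^ (2*2) = r ^ 4 := by norm_num
  rw [hp1, hp2]
  push_cast
  set B1 := (1 - r ^ 2) * s1 + (1 + r ^ 2) * s2 with hB1def
  set B2 := (1 - r ^ 4) * s1 + (1 + r ^ 4) * s2 with hB2def
  have hr2 : r ^ 2 < 1 := by nlinarith
  have hr4 : r ^ 4 < 1 := by nlinarith
  have hB1 : 0 < B1 := add_pos (mul_pos (by linarith) h1) (mul_pos (by positivity) h2)
  have hB2 : 0 < B2 := add_pos (mul_pos (by linarith) h1) (mul_pos (by positivity) h2)
  have key : -(1 - r ^ 2) * ((1 + r ^ 2) * (s1 ^ 2 + s2 ^ 2) + 2 * (1 - r ^ 2) * s1 * s2) /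
        (1 * s1 ^ 2 * B1 ^ 2) * (-4 * r ^ 4 / (2 * B2 ^ 2)) -
      -(1 - r ^ 4) * ((1 + r ^ 4) * (s1 ^ 2 + s2 ^ 2) + 2 * (1 - r ^ 4) * s1 * s2) /
        (2 * s1 ^ 2 * B2 ^ 2) * (-4 * r ^ 2 / (1 * B1 ^ 2)) =
      2 * (r ^ 4 * (1 - r ^ 2) * ((1 + r ^ 2) * (s1 ^ 2 + s2 ^ 2) + 2 * (1 - r ^ 2) * s1 * s2) -
        r ^ 2 * (1 - r ^ 4) * ((1 + r ^ 4) * (s1 ^ 2 + s2 ^ 2) + 2 * (1 - r ^ 4) * s1 * s2)) /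
        (s1 ^ 2 * B1 ^ 2 * B2 ^ 2) := by
    rw [div_mul_div_comm, div_mul_div_comm, div_sub_div _ _ (by positivity) (by positivity),
      div_eq_div_iff (by positivity) (by positivity)]
    ring
  rw [key]
  apply div_neg_of_neg_of_pos
  · have fact : r ^ 4 * (1 - r ^ 2) * ((1 + r ^ 2) * (s1 ^ 2 + s2 ^ 2) + 2 * (1 - r ^ 2) * s1 * s2) -
        r ^ 2 * (1 - r ^ 4) * ((1 + r ^ 4) * (s1 ^ 2 + s2 ^ 2) + 2 * (1 - r ^ 4) * s1 * s2) =
        -(r ^ 2 * (1 - r ^ 2)) * ((1 + r ^ 2) * (1 - r ^ 2 + r ^ 4) * (s1 ^ 2 + s2 ^ 2) +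
          2 * (1 - r ^ 2) * (1 + r ^ 2 + r ^ 4) * s1 * s2) := by ring
    have hpos : 0 < (1 + r ^ 2) * (1 - r ^ 2 + r ^ 4) * (s1 ^ 2 + s2 ^ 2) +
        2 * (1 - r ^ 2) * (1 + r ^ 2 + r ^ 4) * s1 * s2 := by
      apply add_pos
      · exact mul_pos (mul_pos (by positivity) (by nlinarith)) (by positivity)
      · exact mul_pos (mul_pos (by nlinarith) h1) h2
    nlinarith [mul_pos (mul_pos hq1 (show (0:ℝ) < 1 - r ^ 2 by linarith)) hpos]
  · positivity
end

section
/- Fix r ∈ (0,1) and an integer m ≥ 2. The map Λ : (ℝ_{>0})^2 → ℝ^m, Λ(σ) = (λ_1(σ), ..., λ_m(σ)) with λ_j(σ) = (1 + ρ(σ) r^{2j})/(j σ_1 (1 − ρ(σ) r^{2j})) and ρ(σ) = (σ_1 − σ_2)/(σ_1 + σ_2), is injective. -/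
private lemma two_annulus_aux_pos (x u : ℝ) (h1 : -1 < x) (h2 : x < 1)
    (h3 : 0 < u) (h4 : u < 1) : 0 < 1 - x * u ∧ 0 < 1 + x * u := by
  constructor <;> nlinarith

private lemma two_annulus_aux_prod (x y : ℝ) (hx1 : -1 < x) (hx2 : x < 1)
    (hy1 : -1 < y) (hy2 : y < 1) : 0 < x * y + 1 := by nlinarith

/-- Identifiability for the two-annulus radial Calderón problem: for `m ≥ 2`, the map
`σ ↦ (λ₁(σ), ..., λ_m(σ))` is injective on `(ℝ_{>0})²`. -/
theorem two_annulus_injective (r : ℝ) (hr : r ∈ Set.Ioo (0 : ℝ) 1)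
    (m : ℕ) (hm : 2 ≤ m)
    (lam : ℕ → ℝ → ℝ → ℝ)
    (hlam : ∀ (j : ℕ) (s1 s2 : ℝ), lam j s1 s2 =
      (1 + ((s1 - s2) / (s1 + s2)) * r ^ (2 * j)) /
        ((j : ℝ) * s1 * (1 - ((s1 - s2) / (s1 + s2)) * r ^ (2 * j)))) :
    Set.InjOn (fun σ : ℝ × ℝ => fun j : Fin m => lam (j.1 + 1) σ.1 σ.2)
      {σ : ℝ × ℝ | 0 < σ.1 ∧ 0 < σ.2} := by
  rintro ⟨a, b⟩ ⟨ha, hb⟩ ⟨c, d⟩ ⟨hc, hd⟩ h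
  simp only at ha hb hc hd
  obtain ⟨hr0, hr1⟩ := hr
  have h1 := congrFun h (⟨0, by omega⟩ : Fin m)
  have h2 := congrFun h (⟨1, by omega⟩ : Fin m)
  simp only [hlam] at h1 h2
  norm_num at h1 h2
  clear h hlam hm
  have hr4 : r ^ 4 = (r ^ 2) ^ 2 := by ring
  rw [hr4] at h2
  have hu0 : (0:ℝ) < r ^ 2 := by positivity
  have hu1 : r ^ 2 < 1 := pow_lt_one₀ hr0.le hr1 two_ne_zero
  set u : ℝ := r ^ 2 with hu
  set ρ : ℝ := (a - b) / (a + b) with hρ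
  set ρ' : ℝ := (c - d) / (c + d) with hρ'
  have hab : 0 < a + b := by linarith
  have hcd : 0 < c + d := by linarith
  have hρ1 : ρ < 1 := by rw [hρ, div_lt_one hab]; linarith
  have hρ2 : -1 < ρ := by rw [hρ, lt_div_iff₀ hab]; linarith
  have hρ'1 : ρ' < 1 := by rw [hρ', div_lt_one hcd]; linarith
  have hρ'2 : -1 < ρ' := by rw [hρ', lt_div_iff₀ hcd]; linarith
  have hu2 : (0:ℝ) < u ^ 2 := by positivity
  have hu21 : u ^ 2 < 1 := pow_lt_one₀ hu0.le hu1 two_ne_zero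
  obtain ⟨d1, p1⟩ := two_annulus_aux_pos ρ u hρ2 hρ1 hu0 hu1
  obtain ⟨d2, p2⟩ := two_annulus_aux_pos ρ' u hρ'2 hρ'1 hu0 hu1
  obtain ⟨d3, p3⟩ := two_annulus_aux_pos ρ (u ^ 2) hρ2 hρ1 hu2 hu21
  obtain ⟨d4, p4⟩ := two_annulus_aux_pos ρ' (u ^ 2) hρ'2 hρ'1 hu2 hu21
  -- clear denominators in the two boundary-measurement equations
  have P1 : (1 + ρ * u) * (c * (1 - ρ' * u)) = (1 + ρ' * u) * (a * (1 - ρ * u)) :=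
    (div_eq_div_iff (by positivity) (by positivity)).mp h1
  have P2 : (1 + ρ * u ^ 2) * (2 * c * (1 - ρ' * u ^ 2)) =
      (1 + ρ' * u ^ 2) * (2 * a * (1 - ρ * u ^ 2)) :=
    (div_eq_div_iff (by positivity) (by positivity)).mp h2
  -- eliminate σ₁ : the ratio λ₁/λ₂ depends only on ρ
  have hX : c * ((1 + ρ * u) * (1 - ρ' * u) * (1 + ρ' * u ^ 2) * (1 - ρ * u ^ 2))
      = c * ((1 + ρ' * u) * (1 - ρ * u) * (1 + ρ * u ^ 2) * (1 - ρ' * u ^ 2)) := by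
    apply mul_right_cancel₀ (ne_of_gt ha)
    linear_combination a * (1 + ρ' * u ^ 2) * (1 - ρ * u ^ 2) * P1 -
      (a / 2) * (1 + ρ' * u) * (1 - ρ * u) * P2
  have hXY : (1 + ρ * u) * (1 - ρ' * u) * (1 + ρ' * u ^ 2) * (1 - ρ * u ^ 2)
      = (1 + ρ' * u) * (1 - ρ * u) * (1 + ρ * u ^ 2) * (1 - ρ' * u ^ 2) :=
    mul_left_cancel₀ (ne_of_gt hc) hX
  -- strict monotonicity of the ratio in ρ : deduce ρ = ρ'
  have hz : (ρ - ρ') * (2 * u * (1 - u) * (1 + u ^ 3 * ρ * ρ')) = 0 := by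
    linear_combination hXY
  have hppos : 0 < ρ * ρ' + 1 := two_annulus_aux_prod ρ ρ' hρ2 hρ1 hρ'2 hρ'1
  have hu3 : (0:ℝ) < u ^ 3 := by positivity
  have hu31 : u ^ 3 < 1 := pow_lt_one₀ hu0.le hu1 three_ne_zero
  have hfac : 0 < 2 * u * (1 - u) * (1 + u ^ 3 * ρ * ρ') := by
    have hf1 : 0 < 1 + u ^ 3 * ρ * ρ' := by
      have := mul_pos hu3 hppos
      nlinarith
    have h2u : 0 < 2 * u * (1 - u) := by
      have : 0 < 1 - u := by linarith
      positivity
    exact mul_pos h2u hf1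
  have hE : ρ = ρ' := by
    have := (mul_eq_zero.mp hz).resolve_right (ne_of_gt hfac)
    linarith [sub_eq_zero.mp this]
  -- recover σ₁ from λ₁
  rw [hE] at P1
  have hca : (c - a) * ((1 + ρ' * u) * (1 - ρ' * u)) = 0 := by linear_combination P1
  have hac : a = c := by
    have := (mul_eq_zero.mp hca).resolve_right (ne_of_gt (mul_pos p2 d2))
    linarith [sub_eq_zero.mp this]
  -- recover σ₂ from ρ
  rw [hρ, hρ'] at hE
  have hbd' : (a - b) * (c + d) = (c - d) * (a + b) :=
    (div_eq_div_iff (ne_of_gt hab) (ne_of_gt hcd)).mp hE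
  rw [← hac] at hbd'
  have hz2 : 2 * a * (b - d) = 0 := by linear_combination -hbd'
  have hbd : b = d := by
    have := (mul_eq_zero.mp hz2).resolve_left (by positivity : (2:ℝ) * a ≠ 0)
    linarith [sub_eq_zero.mp this]
  rw [Prod.mk.injEq]
  exact ⟨hac, hbd⟩
end

section
/- Fix r ∈ (0,1) and let Λ(σ) = (λ_1(σ), λ_2(σ)) as in the two-annulus model, λ_j(σ) = (1 + ρ(σ) r^{2j})/(j σ_1 (1 − ρ(σ) r^{2j})), ρ(σ) = (σ_1 − σ_2)/(σ_1 + σ_2). For every σ† ∈ (ℝ_{>0})^2, the least squares objective f(σ) = (1/2) ‖Λ(σ) − Λ(σ†)‖_2^2 has exactly one critical point on (ℝ_{>0})^2, namely σ = σ†. -/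
lemma posP (q s1 s2 : ℝ) (h1 : 0 < s1) (h2 : 0 < s2) (hq0 : 0 ≤ q) (hq1 : q < 1) :
    0 < s1 + s2 + (s1 - s2) * q := by nlinarith

lemma posQ (q s1 s2 : ℝ) (h1 : 0 < s1) (h2 : 0 < s2) (hq0 : 0 ≤ q) (hq1 : q < 1) :
    0 < s1 + s2 - (s1 - s2) * q := by nlinarith

lemma inj (r s1 s2 t1 t2 : ℝ) (hr0 : 0 < r) (hr1 : r < 1)
    (hs1 : 0 < s1) (hs2 : 0 < s2) (ht1 : 0 < t1) (ht2 : 0 < t2)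
    (h1 : (s1 + s2 + (s1 - s2) * r ^ 2) / (s1 * (s1 + s2 - (s1 - s2) * r ^ 2)) =
          (t1 + t2 + (t1 - t2) * r ^ 2) / (t1 * (t1 + t2 - (t1 - t2) * r ^ 2)))
    (h2 : (s1 + s2 + (s1 - s2) * r ^ 4) / (2 * (s1 * (s1 + s2 - (s1 - s2) * r ^ 4))) =
          (t1 + t2 + (t1 - t2) * r ^ 4) / (2 * (t1 * (t1 + t2 - (t1 - t2) * r ^ 4)))) :
    s1 = t1 ∧ s2 = t2 := by
  have hr2 : r ^ 2 < 1 := by nlinarith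
  have hr4 : r ^ 4 < 1 := by nlinarith
  have hr6 : r ^ 6 < 1 := by nlinarith
  have hr20 : (0:ℝ) ≤ r ^ 2 := by positivity
  have hr40 : (0:ℝ) ≤ r ^ 4 := by positivity
  have hQ1s := posQ (r^2) s1 s2 hs1 hs2 hr20 hr2
  have hQ2s := posQ (r^4) s1 s2 hs1 hs2 hr40 hr4
  have hQ1t := posQ (r^2) t1 t2 ht1 ht2 hr20 hr2
  have hQ2t := posQ (r^4) t1 t2 ht1 ht2 hr40 hr4
  have hP1t := posP (r^2) t1 t2 ht1 ht2 hr20 hr2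
  have E1 : (s1 + s2 + (s1 - s2) * r ^ 2) * (t1 * (t1 + t2 - (t1 - t2) * r ^ 2)) =
      (t1 + t2 + (t1 - t2) * r ^ 2) * (s1 * (s1 + s2 - (s1 - s2) * r ^ 2)) := by
    rw [div_eq_div_iff (by positivity) (by positivity)] at h1
    linarith [h1]
  have E2 : (s1 + s2 + (s1 - s2) * r ^ 4) * (t1 * (t1 + t2 - (t1 - t2) * r ^ 4)) =
      (t1 + t2 + (t1 - t2) * r ^ 4) * (s1 * (s1 + s2 - (s1 - s2) * r ^ 4)) := by
    rw [div_eq_div_iff (by positivity) (by positivity)] at h2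
    linarith [h2]
  have hK : 0 < (1 + r^6) * (s1*t1 + s2*t2) + (1 - r^6) * (s2*t1 + s1*t2) := by
    have a1 : 0 < (1 + r^6) * (s1*t1 + s2*t2) :=
      mul_pos (by positivity) (add_pos (mul_pos hs1 ht1) (mul_pos hs2 ht2))
    have a2 : 0 < (1 - r^6) * (s2*t1 + s1*t2) :=
      mul_pos (by linarith) (add_pos (mul_pos hs2 ht1) (mul_pos hs1 ht2))
    linarith
  have hfac : (s1*t2 - s2*t1) *
      (s1 * t1 * (4*r^2*(1 - r^2)) *
        ((1 + r^6) * (s1*t1 + s2*t2) + (1 - r^6) * (s2*t1 + s1*t2))) = 0 := by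
    linear_combination ((t1 + t2 + (t1 - t2) * r ^ 4) * s1 * (s1 + s2 - (s1 - s2) * r ^ 4)) * E1
      - ((t1 + t2 + (t1 - t2) * r ^ 2) * s1 * (s1 + s2 - (s1 - s2) * r ^ 2)) * E2
  have hC : 0 < s1 * t1 * (4*r^2*(1 - r^2)) *
      ((1 + r^6) * (s1*t1 + s2*t2) + (1 - r^6) * (s2*t1 + s1*t2)) := by
    have h4 : (0:ℝ) < 4*r^2*(1 - r^2) :=
      mul_pos (by positivity) (by linarith)
    exact mul_pos (mul_pos (mul_pos hs1 ht1) h4) hK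
  have hst : s1 * t2 = s2 * t1 := by
    rcases mul_eq_zero.mp hfac with h | h
    · linarith
    · exact absurd h hC.ne'
  have h11 : s1 * ((t1 + t2 + (t1 - t2) * r ^ 2) * (t1 + t2 - (t1 - t2) * r ^ 2)) * (t1 - s1) = 0 := by
    linear_combination t1 * E1 + ((1 - r^2) * t1 * (t1 + t2 - (t1 - t2) * r ^ 2)
      - (1 + r^2) * s1 * (t1 + t2 + (t1 - t2) * r ^ 2)) * hst
  have hs1t1 : s1 = t1 := by
    rcases mul_eq_zero.mp h11 with h | h
    · exact absurd h (mul_pos hs1 (mul_pos hP1t hQ1t)).ne'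
    · linarith
  refine ⟨hs1t1, ?_⟩
  have h2' : s2 * t1 = t2 * t1 := by linear_combination t2*hs1t1 - hst
  exact mul_right_cancel₀ ht1.ne' h2'

set_option maxHeartbeats 2000000 in
lemma key (r c1 c2 s1 s2 : ℝ) (hr0 : 0 < r) (hr1 : r < 1) (hs1 : 0 < s1) (hs2 : 0 < s2)
    (H : HasFDerivAt (fun p : ℝ × ℝ => (1/2 : ℝ) *
        (((p.1 + p.2 + (p.1 - p.2) * r ^ 2) / (p.1 * (p.1 + p.2 - (p.1 - p.2) * r ^ 2)) - c1) ^ 2 +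
         ((p.1 + p.2 + (p.1 - p.2) * r ^ 4) / (2 * (p.1 * (p.1 + p.2 - (p.1 - p.2) * r ^ 4))) - c2) ^ 2))
      (0 : ℝ × ℝ →L[ℝ] ℝ) (s1, s2)) :
    (s1 + s2 + (s1 - s2) * r ^ 2) / (s1 * (s1 + s2 - (s1 - s2) * r ^ 2)) = c1 ∧
    (s1 + s2 + (s1 - s2) * r ^ 4) / (2 * (s1 * (s1 + s2 - (s1 - s2) * r ^ 4))) = c2 := by
  have hr2 : r ^ 2 < 1 := by nlinarith
  have hr4 : r ^ 4 < 1 := by nlinarith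
  have hr20 : (0:ℝ) ≤ r ^ 2 := by positivity
  have hr40 : (0:ℝ) ≤ r ^ 4 := by positivity
  have hQ1 := posQ (r^2) s1 s2 hs1 hs2 hr20 hr2
  have hQ2 := posQ (r^4) s1 s2 hs1 hs2 hr40 hr4
  have hD1 : s1 * (s1 + s2 - (s1 - s2) * r ^ 2) ≠ 0 := (mul_pos hs1 hQ1).ne'
  have hD2 : 2 * (s1 * (s1 + s2 - (s1 - s2) * r ^ 4)) ≠ 0 := by positivity
  -- direction 1
  have hγ1 : HasDerivAt (fun x : ℝ => ((x, s2) : ℝ × ℝ)) ((1 : ℝ), (0 : ℝ)) s1 :=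
    (hasDerivAt_id s1).prodMk (hasDerivAt_const s1 s2)
  have hcomp1 : HasDerivAt (fun x : ℝ => (1/2 : ℝ) *
      (((x + s2 + (x - s2) * r ^ 2) / (x * (x + s2 - (x - s2) * r ^ 2)) - c1) ^ 2 +
       ((x + s2 + (x - s2) * r ^ 4) / (2 * (x * (x + s2 - (x - s2) * r ^ 4))) - c2) ^ 2)) 0 s1 := by
    have := H.comp_hasDerivAt s1 hγ1
    rw [ContinuousLinearMap.zero_apply] at this
    exact this
  have hA : HasDerivAt (fun x : ℝ => x + s2) 1 s1 := (hasDerivAt_id s1).add_const s2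
  have hB2 : HasDerivAt (fun x : ℝ => (x - s2) * r ^ 2) (1 * r ^ 2) s1 :=
    ((hasDerivAt_id s1).sub_const s2).mul_const (r ^ 2)
  have hB4 : HasDerivAt (fun x : ℝ => (x - s2) * r ^ 4) (1 * r ^ 4) s1 :=
    ((hasDerivAt_id s1).sub_const s2).mul_const (r ^ 4)
  have hn1 : HasDerivAt (fun x : ℝ => x + s2 + (x - s2) * r ^ 2) (1 + 1 * r ^ 2) s1 := hA.add hB2
  have hn2 : HasDerivAt (fun x : ℝ => x + s2 + (x - s2) * r ^ 4) (1 + 1 * r ^ 4) s1 := hA.add hB4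
  have hq1' : HasDerivAt (fun x : ℝ => x + s2 - (x - s2) * r ^ 2) (1 - 1 * r ^ 2) s1 := hA.sub hB2
  have hq2' : HasDerivAt (fun x : ℝ => x + s2 - (x - s2) * r ^ 4) (1 - 1 * r ^ 4) s1 := hA.sub hB4
  have hd1 : HasDerivAt (fun x : ℝ => x * (x + s2 - (x - s2) * r ^ 2))
      (1 * (s1 + s2 - (s1 - s2) * r ^ 2) + s1 * (1 - 1 * r ^ 2)) s1 :=
    (hasDerivAt_id s1).mul hq1'
  have hd2 : HasDerivAt (fun x : ℝ => 2 * (x * (x + s2 - (x - s2) * r ^ 4)))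
      (2 * (1 * (s1 + s2 - (s1 - s2) * r ^ 4) + s1 * (1 - 1 * r ^ 4))) s1 :=
    ((hasDerivAt_id s1).mul hq2').const_mul 2
  have hg1 : HasDerivAt (fun x : ℝ => (x + s2 + (x - s2) * r ^ 2) / (x * (x + s2 - (x - s2) * r ^ 2)))
      (((1 + 1 * r ^ 2) * (s1 * (s1 + s2 - (s1 - s2) * r ^ 2)) -
        (s1 + s2 + (s1 - s2) * r ^ 2) * (1 * (s1 + s2 - (s1 - s2) * r ^ 2) + s1 * (1 - 1 * r ^ 2))) /
        (s1 * (s1 + s2 - (s1 - s2) * r ^ 2)) ^ 2) s1 := hn1.div hd1 hD1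
  have hg2 : HasDerivAt (fun x : ℝ =>
      (x + s2 + (x - s2) * r ^ 4) / (2 * (x * (x + s2 - (x - s2) * r ^ 4))))
      (((1 + 1 * r ^ 4) * (2 * (s1 * (s1 + s2 - (s1 - s2) * r ^ 4))) -
        (s1 + s2 + (s1 - s2) * r ^ 4) * (2 * (1 * (s1 + s2 - (s1 - s2) * r ^ 4) + s1 * (1 - 1 * r ^ 4)))) /
        (2 * (s1 * (s1 + s2 - (s1 - s2) * r ^ 4))) ^ 2) s1 := hn2.div hd2 hD2
  have hφ1 := (((hg1.sub_const c1).pow 2).add ((hg2.sub_const c2).pow 2)).const_mul (1/2 : ℝ)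
  have heq1 := hφ1.unique hcomp1
  -- direction 2
  have hγ2 : HasDerivAt (fun y : ℝ => ((s1, y) : ℝ × ℝ)) ((0 : ℝ), (1 : ℝ)) s2 :=
    (hasDerivAt_const s2 s1).prodMk (hasDerivAt_id s2)
  have hcomp2 : HasDerivAt (fun y : ℝ => (1/2 : ℝ) *
      (((s1 + y + (s1 - y) * r ^ 2) / (s1 * (s1 + y - (s1 - y) * r ^ 2)) - c1) ^ 2 +
       ((s1 + y + (s1 - y) * r ^ 4) / (2 * (s1 * (s1 + y - (s1 - y) * r ^ 4))) - c2) ^ 2)) 0 s2 := by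
    have := H.comp_hasDerivAt s2 hγ2
    rw [ContinuousLinearMap.zero_apply] at this
    exact this
  have hA' : HasDerivAt (fun y : ℝ => s1 + y) 1 s2 := (hasDerivAt_id s2).const_add s1
  have hB2' : HasDerivAt (fun y : ℝ => (s1 - y) * r ^ 2) (-1 * r ^ 2) s2 :=
    ((hasDerivAt_id s2).const_sub s1).mul_const (r ^ 2)
  have hB4' : HasDerivAt (fun y : ℝ => (s1 - y) * r ^ 4) (-1 * r ^ 4) s2 :=
    ((hasDerivAt_id s2).const_sub s1).mul_const (r ^ 4)
  have hn1' : HasDerivAt (fun y : ℝ => s1 + y + (s1 - y) * r ^ 2) (1 + -1 * r ^ 2) s2 := hA'.add hB2'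
  have hn2' : HasDerivAt (fun y : ℝ => s1 + y + (s1 - y) * r ^ 4) (1 + -1 * r ^ 4) s2 := hA'.add hB4'
  have hd1' : HasDerivAt (fun y : ℝ => s1 * (s1 + y - (s1 - y) * r ^ 2))
      (s1 * (1 - -1 * r ^ 2)) s2 := (hA'.sub hB2').const_mul s1
  have hd2' : HasDerivAt (fun y : ℝ => 2 * (s1 * (s1 + y - (s1 - y) * r ^ 4)))
      (2 * (s1 * (1 - -1 * r ^ 4))) s2 := ((hA'.sub hB4').const_mul s1).const_mul 2
  have hg1' : HasDerivAt (fun y : ℝ => (s1 + y + (s1 - y) * r ^ 2) / (s1 * (s1 + y - (s1 - y) * r ^ 2)))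
      (((1 + -1 * r ^ 2) * (s1 * (s1 + s2 - (s1 - s2) * r ^ 2)) -
        (s1 + s2 + (s1 - s2) * r ^ 2) * (s1 * (1 - -1 * r ^ 2))) /
        (s1 * (s1 + s2 - (s1 - s2) * r ^ 2)) ^ 2) s2 := hn1'.div hd1' hD1
  have hg2' : HasDerivAt (fun y : ℝ =>
      (s1 + y + (s1 - y) * r ^ 4) / (2 * (s1 * (s1 + y - (s1 - y) * r ^ 4))))
      (((1 + -1 * r ^ 4) * (2 * (s1 * (s1 + s2 - (s1 - s2) * r ^ 4))) -
        (s1 + s2 + (s1 - s2) * r ^ 4) * (2 * (s1 * (1 - -1 * r ^ 4)))) /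
        (2 * (s1 * (s1 + s2 - (s1 - s2) * r ^ 4))) ^ 2) s2 := hn2'.div hd2' hD2
  have hφ2 := (((hg1'.sub_const c1).pow 2).add ((hg2'.sub_const c2).pow 2)).const_mul (1/2 : ℝ)
  have heq2 := hφ2.unique hcomp2
  norm_num at heq1 heq2
  field_simp [hD1, hD2] at heq1 heq2
  have hWpos : 0 < 8*s1^2*r^2*(1-r^2)*((1+r^6)*(s1^2+s2^2)+2*s1*s2*(1-r^6)) := by
    have h6 : r^6 < 1 := by nlinarith
    have hx : 0 < (1+r^6)*(s1^2+s2^2)+2*s1*s2*(1-r^6) := by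
      have p1 : 0 < (1+r^6)*(s1^2+s2^2) :=
        mul_pos (by positivity) (add_pos (pow_pos hs1 2) (pow_pos hs2 2))
      have p2 : 0 < 2*s1*s2*(1-r^6) :=
        mul_pos (mul_pos (mul_pos two_pos hs1) hs2) (by linarith)
      linarith
    have h8 : 0 < 8*s1^2*r^2*(1-r^2) := by
      have : (0:ℝ) < 8*s1^2*r^2 := by positivity
      exact mul_pos this (by linarith)
    exact mul_pos h8 hx
  have hD2pos : 0 < 2 * (s1 * (s1 + s2 - (s1 - s2) * r ^ 4)) := by positivity
  have hD1pos : 0 < s1 * (s1 + s2 - (s1 - s2) * r ^ 2) := mul_pos hs1 hQ1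
  have he1 : s1 + s2 + (s1 - s2) * r ^ 2 - s1 * (s1 + s2 - (s1 - s2) * r ^ 2) * c1 = 0 := by
    have key1 : (s1 + s2 + (s1 - s2) * r ^ 2 - s1 * (s1 + s2 - (s1 - s2) * r ^ 2) * c1) *
        (2 * (2 * (s1 * (s1 + s2 - (s1 - s2) * r ^ 4))) ^ 3 *
          (8*s1^2*r^2*(1-r^2)*((1+r^6)*(s1^2+s2^2)+2*s1*s2*(1-r^6)))) = 0 := by
      linear_combination
        (-8*s1^4*((s1+s2-(s1-s2)*r^4)*(1-r^4)-(s1+s2+(s1-s2)*r^4)*(1+r^4))) * heq1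
        + (8*s1^4*(s1*(s1+s2-(s1-s2)*r^4)*(1+r^4)-(s1+s2+(s1-s2)*r^4)*((s1+s2-(s1-s2)*r^4)+s1*(1-r^4)))) * heq2
    rcases mul_eq_zero.mp key1 with h | h
    · exact h
    · exact absurd h (mul_pos (mul_pos two_pos (pow_pos hD2pos 3)) hWpos).ne'
  have he2 : s1 + s2 + (s1 - s2) * r ^ 4 - 2 * (s1 * (s1 + s2 - (s1 - s2) * r ^ 4)) * c2 = 0 := by
    have key2 : (s1 + s2 + (s1 - s2) * r ^ 4 - 2 * (s1 * (s1 + s2 - (s1 - s2) * r ^ 4)) * c2) *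
        (2 * (s1 * (s1 + s2 - (s1 - s2) * r ^ 2)) ^ 3 *
          (8*s1^2*r^2*(1-r^2)*((1+r^6)*(s1^2+s2^2)+2*s1*s2*(1-r^6)))) = 0 := by
      linear_combination
        (4*s1^4*((s1+s2-(s1-s2)*r^2)*(1-r^2)-(s1+s2+(s1-s2)*r^2)*(1+r^2))) * heq1
        - (4*s1^4*(s1*(s1+s2-(s1-s2)*r^2)*(1+r^2)-(s1+s2+(s1-s2)*r^2)*((s1+s2-(s1-s2)*r^2)+s1*(1-r^2)))) * heq2
    rcases mul_eq_zero.mp key2 with h | h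
    · exact h
    · exact absurd h (mul_pos (mul_pos two_pos (pow_pos hD1pos 3)) hWpos).ne'
  constructor
  · rw [div_eq_iff hD1]
    linear_combination he1
  · rw [div_eq_iff hD2]
    linear_combination he2

lemma diffF (r c1 c2 : ℝ) (hr0 : 0 < r) (hr1 : r < 1) (p : ℝ × ℝ) (hp1 : 0 < p.1) (hp2 : 0 < p.2) :
    DifferentiableAt ℝ (fun p : ℝ × ℝ => (1/2 : ℝ) *
        (((p.1 + p.2 + (p.1 - p.2) * r ^ 2) / (p.1 * (p.1 + p.2 - (p.1 - p.2) * r ^ 2)) - c1) ^ 2 +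
         ((p.1 + p.2 + (p.1 - p.2) * r ^ 4) / (2 * (p.1 * (p.1 + p.2 - (p.1 - p.2) * r ^ 4))) - c2) ^ 2)) p := by
  have hr2 : r ^ 2 < 1 := by nlinarith
  have hr4 : r ^ 4 < 1 := by nlinarith
  have hQ1 := posQ (r^2) p.1 p.2 hp1 hp2 (by positivity) hr2
  have hQ2 := posQ (r^4) p.1 p.2 hp1 hp2 (by positivity) hr4
  have hD1 : p.1 * (p.1 + p.2 - (p.1 - p.2) * r ^ 2) ≠ 0 := (mul_pos hp1 hQ1).ne'
  have hD2 : 2 * (p.1 * (p.1 + p.2 - (p.1 - p.2) * r ^ 4)) ≠ 0 := by positivity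
  have dn1 : DifferentiableAt ℝ (fun q : ℝ × ℝ => q.1 + q.2 + (q.1 - q.2) * r ^ 2) p := by fun_prop
  have dn2 : DifferentiableAt ℝ (fun q : ℝ × ℝ => q.1 + q.2 + (q.1 - q.2) * r ^ 4) p := by fun_prop
  have dd1 : DifferentiableAt ℝ (fun q : ℝ × ℝ => q.1 * (q.1 + q.2 - (q.1 - q.2) * r ^ 2)) p := by fun_prop
  have dd2 : DifferentiableAt ℝ (fun q : ℝ × ℝ => 2 * (q.1 * (q.1 + q.2 - (q.1 - q.2) * r ^ 4))) p := by fun_prop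
  have d1 : DifferentiableAt ℝ (fun q : ℝ × ℝ =>
      (q.1 + q.2 + (q.1 - q.2) * r ^ 2) / (q.1 * (q.1 + q.2 - (q.1 - q.2) * r ^ 2))) p := by
    simp only [div_eq_mul_inv]
    exact dn1.mul (dd1.inv hD1)
  have d2 : DifferentiableAt ℝ (fun q : ℝ × ℝ =>
      (q.1 + q.2 + (q.1 - q.2) * r ^ 4) / (2 * (q.1 * (q.1 + q.2 - (q.1 - q.2) * r ^ 4)))) p := by
    simp only [div_eq_mul_inv]
    exact dn2.mul (dd2.inv hD2)
  exact (((d1.sub_const c1).pow 2).add ((d2.sub_const c2).pow 2)).const_mul _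

/-- Absence of spurious critical points for the two-annulus least squares objective:
for every `σ† ∈ (ℝ_{>0})²`, the only critical point of
`f(σ) = (1/2)‖Λ(σ) − Λ(σ†)‖²` in `(ℝ_{>0})²` is `σ†` itself. -/
theorem two_annulus_unique_critical_point (r : ℝ) (hr : r ∈ Set.Ioo (0 : ℝ) 1)
    (lam : ℕ → ℝ → ℝ → ℝ)
    (hlam : ∀ (j : ℕ) (s1 s2 : ℝ), lam j s1 s2 =
      (1 + ((s1 - s2) / (s1 + s2)) * r ^ (2 * j)) /
        ((j : ℝ) * s1 * (1 - ((s1 - s2) / (s1 + s2)) * r ^ (2 * j))))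
    (σd : ℝ × ℝ) (hσd : 0 < σd.1 ∧ 0 < σd.2)
    (f : ℝ × ℝ → ℝ)
    (hf : ∀ σ : ℝ × ℝ, f σ = (1 / 2) *
      ((lam 1 σ.1 σ.2 - lam 1 σd.1 σd.2) ^ 2 + (lam 2 σ.1 σ.2 - lam 2 σd.1 σd.2) ^ 2)) :
    {σ : ℝ × ℝ | (0 < σ.1 ∧ 0 < σ.2) ∧ fderiv ℝ f σ = 0} = {σd} := by
  obtain ⟨hr0, hr1⟩ := hr
  have hr2 : r ^ 2 < 1 := by nlinarith
  have hr4 : r ^ 4 < 1 := by nlinarith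
  -- lam in rational normal form
  have lam_eq1 : ∀ a b : ℝ, 0 < a → 0 < b → lam 1 a b =
      (a + b + (a - b) * r ^ 2) / (a * (a + b - (a - b) * r ^ 2)) := by
    intro a b ha hb
    have hab : a + b ≠ 0 := by positivity
    have hQ := posQ (r^2) a b ha hb (by positivity) hr2
    have h3 : 1 - (a - b) / (a + b) * r ^ 2 ≠ 0 := by
      have he : 1 - (a - b) / (a + b) * r ^ 2 = (a + b - (a - b) * r ^ 2) / (a + b) := by
        field_simp
      rw [he]
      positivity
    rw [hlam 1 a b]
    push_cast
    rw [div_eq_div_iff (by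
        exact mul_ne_zero (mul_ne_zero one_ne_zero ha.ne') h3) (mul_pos ha hQ).ne']
    field_simp
    try ring
    try tauto
  have lam_eq2 : ∀ a b : ℝ, 0 < a → 0 < b → lam 2 a b =
      (a + b + (a - b) * r ^ 4) / (2 * (a * (a + b - (a - b) * r ^ 4))) := by
    intro a b ha hb
    have hab : a + b ≠ 0 := by positivity
    have hQ := posQ (r^4) a b ha hb (by positivity) hr4
    have h3 : 1 - (a - b) / (a + b) * r ^ 4 ≠ 0 := by
      have he : 1 - (a - b) / (a + b) * r ^ 4 = (a + b - (a - b) * r ^ 4) / (a + b) := by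
        field_simp
      rw [he]
      positivity
    rw [hlam 2 a b]
    push_cast
    rw [div_eq_div_iff (by
        exact mul_ne_zero (mul_ne_zero two_ne_zero ha.ne') h3) (by positivity)]
    field_simp
    try ring
    try tauto
  set c1 := lam 1 σd.1 σd.2 with hc1
  set c2 := lam 2 σd.1 σd.2 with hc2
  set F : ℝ × ℝ → ℝ := fun p => (1/2 : ℝ) *
      (((p.1 + p.2 + (p.1 - p.2) * r ^ 2) / (p.1 * (p.1 + p.2 - (p.1 - p.2) * r ^ 2)) - c1) ^ 2 +
       ((p.1 + p.2 + (p.1 - p.2) * r ^ 4) / (2 * (p.1 * (p.1 + p.2 - (p.1 - p.2) * r ^ 4))) - c2) ^ 2)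
    with hFdef
  have hUopen : IsOpen {p : ℝ × ℝ | 0 < p.1 ∧ 0 < p.2} :=
    (isOpen_lt continuous_const continuous_fst).inter (isOpen_lt continuous_const continuous_snd)
  have hfF : ∀ p ∈ {p : ℝ × ℝ | 0 < p.1 ∧ 0 < p.2}, f p = F p := by
    intro p hp
    rw [hf p, hFdef]
    simp only
    rw [lam_eq1 p.1 p.2 hp.1 hp.2, lam_eq2 p.1 p.2 hp.1 hp.2]
  ext σ
  simp only [Set.mem_setOf_eq, Set.mem_singleton_iff]
  constructor
  · rintro ⟨⟨h1, h2⟩, hcrit⟩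
    have hEv : f =ᶠ[nhds σ] F :=
      Filter.eventuallyEq_of_mem (hUopen.mem_nhds ⟨h1, h2⟩) hfF
    have hdF : DifferentiableAt ℝ F σ := diffF r c1 c2 hr0 hr1 σ h1 h2
    have hfd : fderiv ℝ F σ = 0 := by
      have heq : fderiv ℝ f σ = fderiv ℝ F σ := Filter.EventuallyEq.fderiv_eq hEv
      rw [← heq]
      exact hcrit
    have H : HasFDerivAt F (0 : ℝ × ℝ →L[ℝ] ℝ) σ := by
      have := hdF.hasFDerivAt
      rwa [hfd] at this
    have H' : HasFDerivAt (fun p : ℝ × ℝ => (1/2 : ℝ) *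
        (((p.1 + p.2 + (p.1 - p.2) * r ^ 2) / (p.1 * (p.1 + p.2 - (p.1 - p.2) * r ^ 2)) - c1) ^ 2 +
         ((p.1 + p.2 + (p.1 - p.2) * r ^ 4) / (2 * (p.1 * (p.1 + p.2 - (p.1 - p.2) * r ^ 4))) - c2) ^ 2))
        (0 : ℝ × ℝ →L[ℝ] ℝ) (σ.1, σ.2) := by
      rw [hFdef] at H
      simpa using H
    obtain ⟨k1, k2⟩ := key r c1 c2 σ.1 σ.2 hr0 hr1 h1 h2 H'
    rw [hc1, lam_eq1 σd.1 σd.2 hσd.1 hσd.2] at k1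
    rw [hc2, lam_eq2 σd.1 σd.2 hσd.1 hσd.2] at k2
    obtain ⟨e1, e2⟩ := inj r σ.1 σ.2 σd.1 σd.2 hr0 hr1 h1 h2 hσd.1 hσd.2 k1 k2
    exact Prod.ext e1 e2
  · rintro rfl
    refine ⟨hσd, ?_⟩
    have hmin : IsLocalMin f σ := by
      apply Filter.Eventually.of_forall
      intro x
      have h0 : f σ = 0 := by rw [hf σ]; simp [hc1, hc2]
      rw [h0, hf x]
      positivity
    exact hmin.fderiv_eq_zero
end

section
/- Let n ≥ 1, let 0 = r_n < r_{n−1} < ... < r_1 < r_0 = 1, and consider the forward map Λ : (ℝ_{>0})^n → ℝ^n of the radial Calderón problem with m = n measurements. At the constant conductivity σ = (1, ..., 1), the Jacobian entries are ∂_i λ_j(σ) = −(1/j)(r_{i−1}^{2j} − r_i^{2j}), and the Jacobian determinant satisfies (−1)^{n(n+1)/2} det Λ'(σ) > 0; in particular Λ'(1) is invertible. -/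
noncomputable section
namespace Jac

def ext (n : ℕ) (σ : Fin n → ℝ) (k : ℕ) : ℝ := if h : k < n then σ ⟨k, h⟩ else 0

def Caux (n j : ℕ) (r σ : ℕ → ℝ) (i : ℕ) : ℝ :=
  if h : n ≤ i then 0
  else
    ((σ (i-1) - σ i) / (σ (i-1) + σ i) * r i ^ (2*j) + Caux n j r σ (i+1)) /
      (1 + (σ (i-1) - σ i) / (σ (i-1) + σ i) * Caux n j r σ (i+1) * (r i ^ (2*j))⁻¹)
termination_by n - i
decreasing_by omega

def P (n : ℕ) (k : ℕ) : (Fin n → ℝ) →L[ℝ] ℝ :=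
  if h : k < n then ContinuousLinearMap.proj ⟨k, h⟩ else 0

def Lmap (n j : ℕ) (r : ℕ → ℝ) (i : ℕ) : (Fin n → ℝ) →L[ℝ] ℝ :=
  ∑ l ∈ Finset.Ico i n, (r l ^ (2*j) / 2) • (P n (l-1) - P n l)

lemma Caux_of_le (n j : ℕ) (r σ : ℕ → ℝ) (i : ℕ) (h : n ≤ i) : Caux n j r σ i = 0 := by
  rw [Caux]; simp [h]

lemma Caux_of_lt (n j : ℕ) (r σ : ℕ → ℝ) (i : ℕ) (h : i < n) : Caux n j r σ i =
    ((σ (i-1) - σ i) / (σ (i-1) + σ i) * r i ^ (2*j) + Caux n j r σ (i+1)) /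
      (1 + (σ (i-1) - σ i) / (σ (i-1) + σ i) * Caux n j r σ (i+1) * (r i ^ (2*j))⁻¹) := by
  rw [Caux]; simp [Nat.not_le.mpr h]

lemma ext_proj (n : ℕ) (k : ℕ) (h : k < n) :
    HasFDerivAt (fun σ : Fin n → ℝ => ext n σ k) (P n k) (fun _ => 1) := by
  simp only [ext, P, dif_pos h]
  exact hasFDerivAt_apply _ _ |>.congr_fderiv rfl

lemma hasFDerivAt_div' {E : Type*} [NormedAddCommGroup E] [NormedSpace ℝ E]
    {u v : E → ℝ} {u' v' : E →L[ℝ] ℝ} {x : E}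
    (hu : HasFDerivAt u u' x) (hv : HasFDerivAt v v' x) (hx : v x ≠ 0) :
    HasFDerivAt (fun y => u y / v y)
      (u x • ((-(v x ^ 2)⁻¹) • v') + (v x)⁻¹ • u') x := by
  have h1 : HasFDerivAt (fun y => (v y)⁻¹) ((-(v x ^ 2)⁻¹) • v') x :=
    (hasDerivAt_inv hx).comp_hasFDerivAt x hv
  simpa only [div_eq_mul_inv] using hu.fun_mul h1

lemma caux_deriv (n j : ℕ) (r : ℕ → ℝ) :
    ∀ k i, i + k = n → 1 ≤ i →
      Caux n j r (ext n (fun _ => 1)) i = 0 ∧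
      HasFDerivAt (fun σ : Fin n → ℝ => Caux n j r (ext n σ) i) (Lmap n j r i)
        (fun _ => 1) := by
  intro k
  induction k with
  | zero =>
      intro i hik hi
      have hin : n ≤ i := by omega
      refine ⟨Caux_of_le _ _ _ _ _ hin, ?_⟩
      have hfun : (fun σ : Fin n → ℝ => Caux n j r (ext n σ) i) = fun _ => 0 :=
        funext fun σ => Caux_of_le _ _ _ _ _ hin
      have hL : Lmap n j r i = 0 := by
        rw [Lmap, Finset.Ico_eq_empty (by omega)]; simp
      rw [hfun, hL]
      exact hasFDerivAt_const _ _
  | succ k ih =>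
      intro i hik hi
      have hiltn : i < n := by omega
      obtain ⟨hC0, hCd⟩ := ih (i+1) (by omega) (by omega)
      have hi1 : i - 1 < n := by omega
      -- derivative of the reflection coefficient
      have hu0 : HasFDerivAt (fun σ : Fin n → ℝ => ext n σ (i-1) - ext n σ i)
          (P n (i-1) - P n i) (fun _ => 1) := (ext_proj n _ hi1).sub (ext_proj n _ hiltn)
      have hv0 : HasFDerivAt (fun σ : Fin n → ℝ => ext n σ (i-1) + ext n σ i)
          (P n (i-1) + P n i) (fun _ => 1) := (ext_proj n _ hi1).add (ext_proj n _ hiltn)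
      have e1 : ext n (fun _ => 1) (i-1) = 1 := by simp [ext, hi1]
      have e2 : ext n (fun _ => 1) i = 1 := by simp [ext, hiltn]
      have hρ : HasFDerivAt
          (fun σ : Fin n → ℝ => (ext n σ (i-1) - ext n σ i) / (ext n σ (i-1) + ext n σ i))
          (((2:ℝ))⁻¹ • (P n (i-1) - P n i)) (fun _ => 1) := by
        have := hasFDerivAt_div' hu0 hv0 (by simp [e1, e2])
        simpa [e1, e2, one_add_one_eq_two] using this
      have hρ0 : (ext n (fun _ => 1) (i-1) - ext n (fun _ => 1) i) /
          (ext n (fun _ => 1) (i-1) + ext n (fun _ => 1) i) = 0 := by simp [e1, e2]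
      -- numerator
      have hU : HasFDerivAt
          (fun σ : Fin n → ℝ =>
            (ext n σ (i-1) - ext n σ i) / (ext n σ (i-1) + ext n σ i) * r i ^ (2*j)
              + Caux n j r (ext n σ) (i+1))
          ((r i ^ (2*j)) • (((2:ℝ))⁻¹ • (P n (i-1) - P n i)) + Lmap n j r (i+1))
          (fun _ => 1) := (hρ.mul_const _).add hCd
      -- denominator
      have hV : HasFDerivAt
          (fun σ : Fin n → ℝ =>
            1 + (ext n σ (i-1) - ext n σ i) / (ext n σ (i-1) + ext n σ i)
              * Caux n j r (ext n σ) (i+1) * (r i ^ (2*j))⁻¹)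
          (0 : (Fin n → ℝ) →L[ℝ] ℝ) (fun _ => 1) := by
        have h2 := (hρ.mul hCd).mul_const ((r i ^ (2*j))⁻¹)
        have h3 := h2.const_add 1
        simpa [hρ0, hC0] using h3
      have hq := hasFDerivAt_div' hU hV (by simp [hρ0, hC0])
      have hfun : (fun σ : Fin n → ℝ => Caux n j r (ext n σ) i) =
          (fun σ : Fin n → ℝ =>
            ((ext n σ (i-1) - ext n σ i) / (ext n σ (i-1) + ext n σ i) * r i ^ (2*j)
              + Caux n j r (ext n σ) (i+1)) /
            (1 + (ext n σ (i-1) - ext n σ i) / (ext n σ (i-1) + ext n σ i)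
              * Caux n j r (ext n σ) (i+1) * (r i ^ (2*j))⁻¹)) := by
        funext σ; exact Caux_of_lt _ _ _ _ _ hiltn
      have hval0 : Caux n j r (ext n (fun _ => 1)) i = 0 := by
        rw [Caux_of_lt _ _ _ _ _ hiltn, hρ0, hC0]; simp
      refine ⟨hval0, ?_⟩
      rw [hfun]
      have hL : Lmap n j r i =
          (r i ^ (2*j)) • (((2:ℝ))⁻¹ • (P n (i-1) - P n i)) + Lmap n j r (i+1) := by
        rw [Lmap, Finset.sum_eq_sum_Ico_succ_bot hiltn, ← Lmap, smul_smul]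
        ring_nf
      rw [hL]
      refine hq.congr_fderiv ?_
      rw [hρ0, hC0]
      simp


lemma P_single (n k : ℕ) (h : k < n) (i' : Fin n) :
    P n k (Pi.single i' (1:ℝ)) = if k = i'.1 then 1 else 0 := by
  rw [P, dif_pos h, ContinuousLinearMap.proj_apply, Pi.single_apply]
  by_cases hk : k = i'.1
  · simp [hk, show (⟨k, h⟩ : Fin n) = i' from Fin.ext hk]
  · simp [hk, show (⟨k, h⟩ : Fin n) ≠ i' from fun hc => hk (congrArg Fin.val hc)]

lemma Lmap_eval (n j : ℕ) (r : ℕ → ℝ) (i' : Fin n) :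
    Lmap n j r 1 (Pi.single i' 1) =
      (if i'.1 + 1 < n then r (i'.1+1) ^ (2*j) / 2 else 0)
      - (if 1 ≤ i'.1 then r i'.1 ^ (2*j) / 2 else 0) := by
  rw [Lmap, ContinuousLinearMap.sum_apply]
  have key : ∀ l ∈ Finset.Ico 1 n,
      ((r l ^ (2*j) / 2) • (P n (l-1) - P n l)) (Pi.single i' (1:ℝ)) =
        (if l = i'.1 + 1 then r (i'.1+1) ^ (2*j) / 2 else 0)
        - (if l = i'.1 then r i'.1 ^ (2*j) / 2 else 0) := by
    intro l hl
    simp only [Finset.mem_Ico] at hl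
    rw [ContinuousLinearMap.smul_apply, ContinuousLinearMap.sub_apply,
      P_single n _ (by omega) i', P_single n _ (by omega) i']
    by_cases h2 : l = i'.1 + 1
    · subst h2
      have h4 : i'.1 + 1 - 1 = i'.1 := by omega
      have h5 : ¬(i'.1 + 1 = i'.1) := by omega
      simp only [h4, if_pos rfl, if_neg h5]
      simp [smul_eq_mul]
    · by_cases h3 : l = i'.1
      · subst h3
        have h4 : ¬(i'.1 - 1 = i'.1) := by omega
        simp only [if_neg h4, if_neg h2]
        simp [smul_eq_mul]
      · have h4 : ¬(l - 1 = i'.1) := by omega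
        simp only [if_neg h4, if_neg h2, if_neg h3]
        simp
  rw [Finset.sum_congr rfl key, Finset.sum_sub_distrib,
    Finset.sum_ite_eq' (Finset.Ico 1 n) (i'.1+1) (fun _ => r (i'.1+1) ^ (2*j) / 2),
    Finset.sum_ite_eq' (Finset.Ico 1 n) i'.1 (fun _ => r i'.1 ^ (2*j) / 2)]
  have := i'.2
  congr 1 <;> simp [Finset.mem_Ico] <;> omega


lemma entry_formula (n j : ℕ) (hn : 1 ≤ n) (r : ℕ → ℝ) (hr0 : r 0 = 1) (hrn : r n = 0)
    (hj : 1 ≤ j) (i' : Fin n) :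
    fderiv ℝ (fun σ : Fin n → ℝ =>
        (1 + Caux n j r (ext n σ) 1) /
          ((j : ℝ) * σ ⟨0, hn⟩ * (1 - Caux n j r (ext n σ) 1)))
      (fun _ => 1) (Pi.single i' 1) =
      -(1 / (j : ℝ)) * (r i'.1 ^ (2*j) - r (i'.1 + 1) ^ (2*j)) := by
  obtain ⟨hC0, hCd⟩ := caux_deriv n j r (n-1) 1 (by omega) le_rfl
  have hjR : (0:ℝ) < (j:ℝ) := by exact_mod_cast hj
  have hP0 : HasFDerivAt (fun σ : Fin n → ℝ => σ ⟨0, hn⟩)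
      (ContinuousLinearMap.proj (R := ℝ) (φ := fun _ : Fin n => ℝ) ⟨0, hn⟩)
      (fun _ => 1) := hasFDerivAt_apply (⟨0, hn⟩ : Fin n) (fun _ => (1:ℝ))
  have num : HasFDerivAt (fun σ : Fin n → ℝ => 1 + Caux n j r (ext n σ) 1)
      (Lmap n j r 1) (fun _ => 1) := hCd.const_add 1
  have den1 : HasFDerivAt (fun σ : Fin n → ℝ => (j:ℝ) * σ ⟨0, hn⟩)
      ((j:ℝ) • ContinuousLinearMap.proj (R := ℝ) (φ := fun _ : Fin n => ℝ) ⟨0, hn⟩)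
      (fun _ => 1) := hP0.const_mul _
  have den2 : HasFDerivAt (fun σ : Fin n → ℝ => 1 - Caux n j r (ext n σ) 1)
      (-(Lmap n j r 1)) (fun _ => 1) := hCd.const_sub 1
  have den := den1.fun_mul den2
  have hne : ((j:ℝ) * (fun _ : Fin n => (1:ℝ)) ⟨0, hn⟩ *
      (1 - Caux n j r (ext n (fun _ => 1)) 1)) ≠ 0 := by
    simp [hC0]; positivity
  have hfd := (hasFDerivAt_div' num den hne).fderiv
  rw [hfd]
  have hP0val : (Pi.single i' 1 : Fin n → ℝ) ⟨0, hn⟩ = if i'.1 = 0 then 1 else 0 := by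
    rw [Pi.single_apply]
    by_cases h : i'.1 = 0
    · simp [h, show (⟨0, hn⟩ : Fin n) = i' from (Fin.ext h.symm)]
    · simp [h, show (⟨0, hn⟩ : Fin n) ≠ i' from fun hc => h (congrArg Fin.val hc).symm]
  simp only [ContinuousLinearMap.add_apply, ContinuousLinearMap.smul_apply,
    ContinuousLinearMap.neg_apply, smul_eq_mul, ContinuousLinearMap.proj_apply,
    Lmap_eval n j r i', hP0val, hC0]
  have hjne : (j:ℝ) ≠ 0 := ne_of_gt hjR
  have h2j : 2*j ≠ 0 := by omega
  rcases Nat.lt_or_ge (i'.1+1) n with hlt | hge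
  · rw [if_pos hlt]
    by_cases h0 : i'.1 = 0
    · rw [if_pos h0, if_neg (by omega), h0, hr0]
      field_simp
      ring
    · rw [if_neg h0, if_pos (by omega)]
      field_simp
      ring
  · have hEq : i'.1 + 1 = n := by omega
    rw [if_neg (by omega)]
    have hrn' : r (i'.1+1) = 0 := by rw [hEq, hrn]
    rw [hrn', zero_pow h2j]
    by_cases h0 : i'.1 = 0
    · rw [if_pos h0, if_neg (by omega), h0, hr0]
      field_simp
      ring
    · rw [if_neg h0, if_pos (by omega)]
      field_simp
      ring


lemma det_pos (n : ℕ) (hn : 1 ≤ n) (r : ℕ → ℝ) (hr0 : r 0 = 1) (hrn : r n = 0)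
    (hrmono : ∀ i, i < n → r (i + 1) < r i) :
    0 < (-1:ℝ)^(n*(n+1)/2) * (Matrix.of fun j i : Fin n =>
      -(1 / (j.1 + 1 : ℝ)) * ((r i.1) ^ (2 * (j.1 + 1)) - (r (i.1 + 1)) ^ (2 * (j.1 + 1)))).det := by
  set R : ℕ → ℝ := fun i => r i ^ 2 with hR
  -- monotonicity facts
  have hranti : ∀ a b, b ≤ n → a < b → r b < r a := by
    intro a b hbn hab
    induction b with
    | zero => omega
    | succ b ihb =>
        rcases Nat.lt_or_ge a b with h | h
        · exact lt_trans (hrmono b (by omega)) (ihb (by omega) h)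
        · have : a = b := by omega
          subst this
          exact hrmono a (by omega)
  have hrpos : ∀ a, a < n → 0 < r a := by
    intro a ha
    have := hranti a n le_rfl ha
    rw [hrn] at this
    linarith
  have hrnonneg : ∀ a, a ≤ n → 0 ≤ r a := by
    intro a ha
    rcases Nat.lt_or_ge a n with h | h
    · exact (hrpos a h).le
    · have : a = n := by omega
      rw [this, hrn]
  have hRpos : ∀ a, a < n → 0 < R a := fun a ha => pow_pos (hrpos a ha) 2
  have hRanti : ∀ a b, b ≤ n → a < b → R b < R a := by
    intro a b hbn hab
    exact pow_lt_pow_left₀ (hranti a b hbn hab) (hrnonneg b hbn) (by norm_num)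
  have hRn : R n = 0 := by simp [hR, hrn]
  -- matrices
  set M : Matrix (Fin n) (Fin n) ℝ := Matrix.of fun j i : Fin n =>
      -(1 / (j.1 + 1 : ℝ)) * ((r i.1) ^ (2 * (j.1 + 1)) - (r (i.1 + 1)) ^ (2 * (j.1 + 1))) with hM
  set N : Matrix (Fin n) (Fin n) ℝ := Matrix.of fun j i : Fin n =>
      R i.1 ^ (j.1+1) - R (i.1+1) ^ (j.1+1) with hN
  set T : Matrix (Fin n) (Fin n) ℝ := Matrix.of fun k i : Fin n =>
      if i.1 ≤ k.1 then 1 else 0 with hT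
  set V : Matrix (Fin n) (Fin n) ℝ := Matrix.of fun j i : Fin n => R i.1 ^ (j.1+1) with hV
  have h1 : M = Matrix.diagonal (fun j : Fin n => -(1 / (j.1 + 1 : ℝ))) * N := by
    ext j i
    rw [Matrix.diagonal_mul]
    simp only [hM, hN, Matrix.of_apply]
    rw [pow_mul, pow_mul]
  have h2 : N * T = V := by
    ext j i
    rw [Matrix.mul_apply]
    simp only [hN, hT, hV, Matrix.of_apply]
    have : ∀ k : Fin n, (R k.1 ^ (j.1+1) - R (k.1+1) ^ (j.1+1)) * (if i.1 ≤ k.1 then (1:ℝ) else 0)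
        = if i.1 ≤ k.1 then (R k.1 ^ (j.1+1) - R (k.1+1) ^ (j.1+1)) else 0 := by
      intro k; by_cases h : i.1 ≤ k.1 <;> simp [h]
    rw [Finset.sum_congr rfl (fun k _ => this k)]
    rw [Fin.sum_univ_eq_sum_range (fun k => if i.1 ≤ k then (R k ^ (j.1+1) - R (k+1) ^ (j.1+1)) else 0) n]
    rw [Finset.range_eq_Ico, ← Finset.sum_Ico_consecutive _ (Nat.zero_le i.1) i.2.le]
    rw [Finset.sum_eq_zero (fun k hk => by
      simp only [Finset.mem_Ico] at hk
      rw [if_neg (by omega)]),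
      zero_add]
    rw [Finset.sum_congr rfl (fun k hk => by
      simp only [Finset.mem_Ico] at hk
      rw [if_pos hk.1])]
    rw [Finset.sum_Ico_eq_sub _ i.2.le, Finset.sum_range_sub' (fun k => R k ^ (j.1+1)),
      Finset.sum_range_sub' (fun k => R k ^ (j.1+1))]
    rw [hRn, zero_pow (by omega)]
    ring
  have h3 : T.det = 1 := by
    rw [Matrix.det_of_lowerTriangular T (fun a b hab => by
      simp only [hT, Matrix.of_apply]
      rw [if_neg (by exact Nat.not_le.mpr hab)])]
    simp [hT]
  have h4 : V.det = (∏ i : Fin n, R i.1) *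
      ∏ i : Fin n, ∏ k ∈ Finset.Ioi i, (R k.1 - R i.1) := by
    rw [← Matrix.det_transpose]
    have : V.transpose = Matrix.diagonal (fun i : Fin n => R i.1) *
        Matrix.vandermonde (fun i : Fin n => R i.1) := by
      ext i k
      rw [Matrix.diagonal_mul]
      simp only [hV, Matrix.transpose_apply, Matrix.of_apply, Matrix.vandermonde_apply]
      rw [pow_succ']
    rw [this, Matrix.det_mul, Matrix.det_diagonal, Matrix.det_vandermonde]
  have hdetN : N.det = V.det := by
    calc N.det = N.det * T.det := by rw [h3, mul_one]
    _ = (N * T).det := (Matrix.det_mul N T).symm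
    _ = V.det := by rw [h2]
  -- product sign manipulations
  have hprodneg1 : (∏ j : Fin n, -(1 / (j.1 + 1 : ℝ))) =
      (-1:ℝ)^n * ∏ j : Fin n, (1 / (j.1 + 1 : ℝ)) := by
    rw [Finset.prod_congr rfl (fun j _ => show -(1 / (j.1 + 1 : ℝ)) = (-1) * (1 / (j.1+1:ℝ)) by ring),
      Finset.prod_mul_distrib, Finset.prod_const, Finset.card_univ, Fintype.card_fin]
  have hinner : ∀ i : Fin n, ∏ k ∈ Finset.Ioi i, (R k.1 - R i.1) =
      (-1:ℝ)^(Finset.Ioi i).card * ∏ k ∈ Finset.Ioi i, (R i.1 - R k.1) := by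
    intro i
    rw [Finset.prod_congr rfl (fun k _ => show (R k.1 - R i.1) = (-1) * (R i.1 - R k.1) by ring),
      Finset.prod_mul_distrib, Finset.prod_const]
  have hprodneg2 : (∏ i : Fin n, ∏ k ∈ Finset.Ioi i, (R k.1 - R i.1)) =
      (-1:ℝ)^(∑ i : Fin n, (Finset.Ioi i).card) *
        ∏ i : Fin n, ∏ k ∈ Finset.Ioi i, (R i.1 - R k.1) := by
    rw [Finset.prod_congr rfl (fun i _ => hinner i), Finset.prod_mul_distrib,
      Finset.prod_pow_eq_pow_sum]
  -- positivity of the three products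
  have hq1 : 0 < ∏ j : Fin n, (1 / (j.1 + 1 : ℝ)) :=
    Finset.prod_pos fun j _ => by positivity
  have hpR : 0 < ∏ i : Fin n, R i.1 :=
    Finset.prod_pos fun i _ => hRpos i.1 i.2
  have hq2 : 0 < ∏ i : Fin n, ∏ k ∈ Finset.Ioi i, (R i.1 - R k.1) := by
    apply Finset.prod_pos
    intro i _
    apply Finset.prod_pos
    intro k hk
    have hik : i < k := Finset.mem_Ioi.mp hk
    exact sub_pos.mpr (hRanti i.1 k.1 k.2.le hik)
  -- the total sign exponent is even
  have hsum : (∑ i : Fin n, (Finset.Ioi i).card) = ∑ k ∈ Finset.range n, k := by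
    have hc : ∀ i : Fin n, (Finset.Ioi i).card = n - 1 - i.1 := fun i => Fin.card_Ioi i
    rw [Finset.sum_congr rfl (fun i _ => hc i),
      Fin.sum_univ_eq_sum_range (fun i => n - 1 - i) n,
      ← Finset.sum_range_reflect (fun k => k) n]
  have hgauss : (∑ k ∈ Finset.range n, k) = n*(n-1)/2 := Finset.sum_range_id n
  have hev : Even (n*(n+1)/2 + (n + n*(n-1)/2)) := by
    have hA : 2 ∣ n*(n-1) := by
      rcases Nat.even_or_odd n with h | h
      · exact Dvd.dvd.mul_right h.two_dvd _
      · have h' : Even (n-1) := by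
          rcases h with ⟨k, hk⟩
          exact ⟨k, by omega⟩
        exact Dvd.dvd.mul_left h'.two_dvd _
    have hB : 2 ∣ n*(n+1) := (Nat.even_mul_succ_self n).two_dvd
    have e1 : n*(n-1)/2*2 = n*(n-1) := Nat.div_mul_cancel hA
    have e2 : n*(n+1)/2*2 = n*(n+1) := Nat.div_mul_cancel hB
    have hmul1 : n*(n-1) + n = n*n := by
      have hn' : n - 1 + 1 = n := by omega
      calc n*(n-1) + n = n*((n-1)+1) := by rw [Nat.mul_succ]
      _ = n*n := by rw [hn']
    have hmul2 : n*(n+1) = n*n + n := by ring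
    rw [Nat.even_iff]
    set p := n*(n-1) with hp
    set q := n*(n+1) with hq
    set s := n*n with hs
    omega
  have goal_eq : (-1:ℝ)^(n*(n+1)/2) * M.det =
      ((-1:ℝ)^(n*(n+1)/2 + (n + n*(n-1)/2))) *
        ((∏ j : Fin n, 1/(j.1+1:ℝ)) * ((∏ i : Fin n, R i.1) *
          (∏ i : Fin n, ∏ k ∈ Finset.Ioi i, (R i.1 - R k.1)))) := by
    rw [h1, Matrix.det_mul, Matrix.det_diagonal, hdetN, h4, hprodneg1, hprodneg2,
      hsum, hgauss, pow_add, pow_add]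
    ring
  rw [goal_eq, Even.neg_one_pow hev, one_mul]
  exact mul_pos hq1 (mul_pos hpR hq2)

end Jac

open Jac in
/-- At the constant conductivity `σ = 1`, the Jacobian of the forward map of the radial
Calderón problem with `m = n` measurements has entries
`∂_i λ_j(1) = −(1/j)(r_{i−1}^{2j} − r_i^{2j})` and its determinant satisfies
`(−1)^{n(n+1)/2} det Λ'(1) > 0`; in particular `Λ'(1)` is invertible. -/
theorem jacobian_at_constant_conductivity (n : ℕ) (hn : 1 ≤ n)
    (r : ℕ → ℝ) (hr0 : r 0 = 1) (hrn : r n = 0)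
    (hrmono : ∀ i, i < n → r (i + 1) < r i)
    (C : (Fin n → ℝ) → ℕ → ℕ → ℝ)
    (hCn : ∀ (σ : Fin n → ℝ) (j : ℕ), C σ j n = 0)
    (hCrec : ∀ (σ : Fin n → ℝ) (j : ℕ), 1 ≤ j → ∀ i (hi : 1 ≤ i) (hi' : i ≤ n - 1),
      C σ j i =
        ((σ ⟨i - 1, by omega⟩ - σ ⟨i, by omega⟩) / (σ ⟨i - 1, by omega⟩ + σ ⟨i, by omega⟩)
            * (r i) ^ (2 * j) + C σ j (i + 1)) /
          (1 + (σ ⟨i - 1, by omega⟩ - σ ⟨i, by omega⟩) /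
              (σ ⟨i - 1, by omega⟩ + σ ⟨i, by omega⟩) * C σ j (i + 1) *
            ((r i) ^ (2 * j))⁻¹))
    (lam : (Fin n → ℝ) → ℕ → ℝ)
    (hlam : ∀ (σ : Fin n → ℝ) (j : ℕ), 1 ≤ j →
      lam σ j = (1 + C σ j 1) / ((j : ℝ) * σ ⟨0, by omega⟩ * (1 - C σ j 1))) :
    (∀ j i : Fin n,
      fderiv ℝ (fun σ => lam σ (j.1 + 1)) (fun _ => 1) (Pi.single i 1) =
        -(1 / (j.1 + 1 : ℝ)) * ((r i.1) ^ (2 * (j.1 + 1)) - (r (i.1 + 1)) ^ (2 * (j.1 + 1)))) ∧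
    0 < (-1 : ℝ) ^ (n * (n + 1) / 2) *
      (Matrix.of fun j i : Fin n =>
        fderiv ℝ (fun σ => lam σ (j.1 + 1)) (fun _ => 1) (Pi.single i 1)).det := by
  have C_eq : ∀ (σ : Fin n → ℝ) (j : ℕ), 1 ≤ j → ∀ k i, i + k = n → 1 ≤ i →
      C σ j i = Caux n j r (ext n σ) i := by
    intro σ j hj k
    induction k with
    | zero =>
        intro i hik hi
        have hin : i = n := by omega
        rw [hin, hCn, Caux_of_le _ _ _ _ _ le_rfl]
    | succ k ih =>
        intro i hik hi
        have hiltn : i < n := by omega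
        have e1 : ext n σ (i-1) = σ ⟨i-1, by omega⟩ := by
          simp [ext, show i-1 < n from by omega]
        have e2 : ext n σ i = σ ⟨i, by omega⟩ := by
          simp [ext, hiltn]
        rw [hCrec σ j hj i hi (by omega), Caux_of_lt n j r (ext n σ) i hiltn,
          ih (i+1) (by omega) (by omega), e1, e2]
  have hentry : ∀ j i : Fin n,
      fderiv ℝ (fun σ => lam σ (j.1 + 1)) (fun _ => 1) (Pi.single i 1) =
        -(1 / (j.1 + 1 : ℝ)) *
          ((r i.1) ^ (2 * (j.1 + 1)) - (r (i.1 + 1)) ^ (2 * (j.1 + 1))) := by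
    intro j i
    have hfun : (fun σ : Fin n → ℝ => lam σ (j.1+1)) = fun σ : Fin n → ℝ =>
        (1 + Caux n (j.1+1) r (ext n σ) 1) /
          (((j.1+1 : ℕ) : ℝ) * σ ⟨0, hn⟩ * (1 - Caux n (j.1+1) r (ext n σ) 1)) := by
      funext σ
      rw [hlam σ (j.1+1) (by omega),
        C_eq σ (j.1+1) (by omega) (n-1) 1 (by omega) le_rfl]
    rw [hfun, entry_formula n (j.1+1) hn r hr0 hrn (by omega) i]
    push_cast
    ring
  refine ⟨hentry, ?_⟩
  have hMeq : (Matrix.of fun j i : Fin n =>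
      fderiv ℝ (fun σ => lam σ (j.1 + 1)) (fun _ => 1) (Pi.single i 1)) =
      Matrix.of fun j i : Fin n =>
        -(1 / (j.1 + 1 : ℝ)) *
          ((r i.1) ^ (2 * (j.1 + 1)) - (r (i.1 + 1)) ^ (2 * (j.1 + 1))) := by
    ext j i
    simp only [Matrix.of_apply]
    exact hentry j i
  rw [hMeq]
  exact det_pos n hn r hr0 hrn hrmono
end
end

section
/- Fix r ∈ (0,1) and a positive integer j, and let λ_j(σ_1, σ_2) = (1 + ρ r^{2j})/(j σ_1 (1 − ρ r^{2j})) with ρ = (σ_1 − σ_2)/(σ_1 + σ_2). Then the function λ_j : (ℝ_{>0})^2 → ℝ is convex. -/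
open Set

/-- `x ↦ x⁻¹` is convex on `(0,∞)`. -/
lemma aux_convexOn_inv' : ConvexOn ℝ (Set.Ioi (0:ℝ)) fun x : ℝ => x⁻¹ := by
  have h := (strictConvexOn_zpow (m := -1) (by decide) (by decide)).convexOn
  refine h.congr fun x _ => ?_
  simp [zpow_neg_one]

/-- The reciprocal of a positive linear functional on `ℝ × ℝ` is convex. -/
lemma aux_recip_linear_convex (p q : ℝ)
    (S : Set (ℝ × ℝ)) (hS : Convex ℝ S)
    (hpos : ∀ σ ∈ S, 0 < p * σ.1 + q * σ.2) :
    ConvexOn ℝ S (fun σ : ℝ × ℝ => (p * σ.1 + q * σ.2)⁻¹) := by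
  let L : (ℝ × ℝ) →ᵃ[ℝ] ℝ :=
    (p • LinearMap.fst ℝ ℝ ℝ + q • LinearMap.snd ℝ ℝ ℝ).toAffineMap
  have hcomp := aux_convexOn_inv'.comp_affineMap L
  have := hcomp.subset (fun σ hσ => hpos σ hσ) hS
  exact this

/-- Convexity of the two-annulus Neumann-to-Dirichlet eigenvalue
`λ_j(σ₁,σ₂) = (1 + ρ r^(2j))/(j σ₁ (1 − ρ r^(2j)))`, `ρ = (σ₁−σ₂)/(σ₁+σ₂)`,
on the positive quadrant. -/
theorem two_annulus_eigenvalue_convex (r : ℝ) (hr : r ∈ Set.Ioo (0 : ℝ) 1)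
    (j : ℕ) (hj : 1 ≤ j)
    (lam : ℝ → ℝ → ℝ)
    (hlam : ∀ s1 s2 : ℝ, lam s1 s2 =
      (1 + ((s1 - s2) / (s1 + s2)) * r ^ (2 * j)) /
        ((j : ℝ) * s1 * (1 - ((s1 - s2) / (s1 + s2)) * r ^ (2 * j)))) :
    ConvexOn ℝ {σ : ℝ × ℝ | 0 < σ.1 ∧ 0 < σ.2} (fun σ => lam σ.1 σ.2) := by
  obtain ⟨hr0, hr1⟩ := hr
  set S : Set (ℝ × ℝ) := {σ : ℝ × ℝ | 0 < σ.1 ∧ 0 < σ.2} with hSdef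
  have hS : Convex ℝ S := by
    have : S = Set.Ioi (0:ℝ) ×ˢ Set.Ioi (0:ℝ) := by
      ext σ; simp [hSdef, Set.mem_prod]
    rw [this]
    exact (convex_Ioi 0).prod (convex_Ioi 0)
  set t : ℝ := r ^ (2 * j) with htdef
  have ht0 : 0 < t := pow_pos hr0 _
  have ht1 : t < 1 := pow_lt_one₀ hr0.le hr1 (by omega)
  have hjpos : (0:ℝ) < j := by exact_mod_cast Nat.lt_of_lt_of_le Nat.zero_lt_one hj
  set a : ℝ := 1 + t with hadef
  set b : ℝ := 1 - t with hbdef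
  have ha : 0 < a := by simp [hadef]; linarith
  have hb : 0 < b := by simp [hbdef]; linarith
  set c1 : ℝ := b / (a * j) with hc1def
  set c2 : ℝ := (a ^ 2 - b ^ 2) / (a * j) with hc2def
  have hc1 : 0 ≤ c1 := le_of_lt (div_pos hb (mul_pos ha hjpos))
  have hc2 : 0 ≤ c2 := by
    apply le_of_lt (div_pos _ (mul_pos ha hjpos))
    have : a ^ 2 - b ^ 2 = 4 * t := by rw [hadef, hbdef]; ring
    rw [this]; linarith
  have h1 : ConvexOn ℝ S (fun σ : ℝ × ℝ => ((1:ℝ) * σ.1 + 0 * σ.2)⁻¹) :=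
    aux_recip_linear_convex 1 0 S hS (fun σ hσ => by simpa using hσ.1)
  have h2 : ConvexOn ℝ S (fun σ : ℝ × ℝ => (b * σ.1 + a * σ.2)⁻¹) :=
    aux_recip_linear_convex b a S hS
      (fun σ hσ => add_pos (mul_pos hb hσ.1) (mul_pos ha hσ.2))
  have hsum := (h1.smul hc1).add (h2.smul hc2)
  refine hsum.congr fun σ hσ => ?_
  obtain ⟨h1σ, h2σ⟩ := hσ
  have hs12 : 0 < σ.1 + σ.2 := add_pos h1σ h2σ
  have hden : 0 < b * σ.1 + a * σ.2 := add_pos (mul_pos hb h1σ) (mul_pos ha h2σ)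
  have hkey : 1 - (σ.1 - σ.2) / (σ.1 + σ.2) * t = (b * σ.1 + a * σ.2) / (σ.1 + σ.2) := by
    field_simp
    rw [hadef, hbdef]; ring
  have hkey' : 1 + (σ.1 - σ.2) / (σ.1 + σ.2) * t = (a * σ.1 + b * σ.2) / (σ.1 + σ.2) := by
    field_simp
    rw [hadef, hbdef]; ring
  simp only [Pi.add_apply, smul_eq_mul, hlam, ← htdef, hkey, hkey']
  rw [hc1def, hc2def]
  field_simp
  ring
end
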